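/- arXiv:1306.6064 — 8 statements merged into one kernel-verified Lean document; each statement's English description precedes it below -/
import Mathlib

section
/- Let q be a real number with 0 < q < 1, and let z ∈ ℂ satisfy 0 < Re(z) < 1. Then, as d → ∞, |μ_d(q^z + q^{−z}) / μ_d(q + q^{−1})| = O(q^{d(1 − Re(z))}); that is, there exist C > 0 and D ∈ ℕ such that for all d ≥ D, |μ_d(q^z + q^{−z})| ≤ C · q^{d(1 − Re(z))} · μ_d(q + q^{−1}). -/
/-- The dilated Chebyshev polynomials of the second kind. -/
def mu {R : Type*} [CommRing R] : ℕ → R → R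
  | 0, _ => 1
  | 1, x => x
  | n + 2, x => x * mu (n + 1) x - mu n x

/-- `q^z = exp(z · log q)` for a real `q > 0` and complex `z`. -/
noncomputable def cpw (q : ℝ) (z : ℂ) : ℂ := Complex.exp (z * (Real.log q : ℂ))

lemma mu_formula {K : Type*} [Field K] (t : K) (ht : t ≠ 0) :
    ∀ d : ℕ, (t - t⁻¹) * mu d (t + t⁻¹) = t ^ (d + 1) - t⁻¹ ^ (d + 1)
  | 0 => by simp [mu]
  | 1 => by simp only [mu]; ring
  | (n + 2) => by
    have h1 := mu_formula t ht (n + 1)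
    have h0 := mu_formula t ht n
    have h : t * t⁻¹ = 1 := mul_inv_cancel₀ ht
    simp only [mu]
    linear_combination (t + t⁻¹) * h1 - h0 + (t ^ (n + 1) - t⁻¹ ^ (n + 1)) * h

theorem stmt1 (q : ℝ) (hq0 : 0 < q) (hq1 : q < 1) (z : ℂ)
    (hz0 : 0 < z.re) (hz1 : z.re < 1) :
    ∃ C : ℝ, 0 < C ∧ ∃ D : ℕ, ∀ d : ℕ, D ≤ d →
      ‖mu d (cpw q z + cpw q (-z))‖ ≤ C * q ^ ((d : ℝ) * (1 - z.re)) * mu d (q + q⁻¹) := by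
  have hlog : Real.log q < 0 := Real.log_neg hq0 hq1
  set t : ℂ := cpw q z with ht_def
  have ht0 : t ≠ 0 := Complex.exp_ne_zero _
  have hinv : cpw q (-z) = t⁻¹ := by
    rw [ht_def]; unfold cpw
    rw [← Complex.exp_neg]
    ring_nf
  have hnt : ‖t‖ = q ^ z.re := by
    rw [ht_def]; unfold cpw
    rw [Complex.norm_exp, Real.rpow_def_of_pos hq0]
    congr 1
    simp [Complex.mul_re]
    ring
  have hnti : ‖t⁻¹‖ = q ^ (-z.re) := by
    rw [norm_inv, hnt, Real.rpow_neg hq0.le]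
  have ha1 : q ^ z.re < 1 := Real.rpow_lt_one hq0.le hq1 hz0
  have hb1 : (1:ℝ) < q ^ (-z.re) := by
    exact (Real.one_lt_rpow_iff_of_pos hq0).2 (Or.inr ⟨hq1, by linarith⟩)
  set δ : ℝ := q ^ (-z.re) - q ^ z.re with hδ_def
  have hδ : 0 < δ := by
    have : (0:ℝ) < q ^ z.re := Real.rpow_pos_of_pos hq0 _
    simp only [hδ_def]; linarith
  have hden : δ ≤ ‖t - t⁻¹‖ := by
    calc δ = ‖t⁻¹‖ - ‖t‖ := by rw [hnt, hnti]
    _ ≤ ‖t⁻¹ - t‖ := norm_sub_norm_le _ _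
    _ = ‖t - t⁻¹‖ := norm_sub_rev _ _
  refine ⟨2 / δ * q ^ (-z.re), by positivity, 0, fun d _ => ?_⟩
  -- complex side bound
  have hform := mu_formula t ht0 d
  have hnum : ‖t ^ (d + 1) - t⁻¹ ^ (d + 1)‖ ≤ 2 * q ^ (-z.re * ((d:ℝ) + 1)) := by
    calc ‖t ^ (d + 1) - t⁻¹ ^ (d + 1)‖ ≤ ‖t ^ (d+1)‖ + ‖t⁻¹ ^ (d+1)‖ := norm_sub_le _ _
    _ = ‖t‖ ^ (d+1) + ‖t⁻¹‖ ^ (d+1) := by rw [norm_pow, norm_pow]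
    _ ≤ (q ^ (-z.re)) ^ (d+1) + (q ^ (-z.re)) ^ (d+1) := by
        rw [hnt, hnti]
        have h1 : (0:ℝ) ≤ q ^ z.re := (Real.rpow_pos_of_pos hq0 _).le
        have h2 : q ^ z.re ≤ q ^ (-z.re) := by linarith
        exact add_le_add (pow_le_pow_left₀ h1 h2 _) le_rfl
    _ = 2 * q ^ (-z.re * ((d:ℝ) + 1)) := by
        rw [← Real.rpow_natCast (q ^ (-z.re)) (d+1), ← Real.rpow_mul hq0.le]
        push_cast
        ring_nf
  have hmu_norm : ‖mu d (t + t⁻¹)‖ ≤ 2 * q ^ (-z.re * ((d:ℝ) + 1)) / δ := by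
    rw [le_div_iff₀ hδ]
    calc ‖mu d (t + t⁻¹)‖ * δ ≤ ‖mu d (t + t⁻¹)‖ * ‖t - t⁻¹‖ := by
          gcongr
    _ = ‖(t - t⁻¹) * mu d (t + t⁻¹)‖ := by rw [← norm_mul, mul_comm]
    _ = ‖t ^ (d + 1) - t⁻¹ ^ (d + 1)‖ := by rw [hform]
    _ ≤ 2 * q ^ (-z.re * ((d:ℝ) + 1)) := hnum
  -- real side bound
  have hformR := mu_formula (q : ℝ) hq0.ne' d
  have hqd1 : (0:ℝ) < q ^ (d+1) := pow_pos hq0 _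
  have hiq : q < q⁻¹ := by
    nlinarith [mul_inv_cancel₀ hq0.ne', inv_pos.mpr hq0]
  have hmu_ge : (q ^ d)⁻¹ ≤ mu d (q + q⁻¹) := by
    have h : (q⁻¹ - q) * mu d (q + q⁻¹) = q⁻¹ ^ (d+1) - q ^ (d+1) := by
      linear_combination -hformR
    have key : (q⁻¹ - q) * (q ^ d)⁻¹ ≤ (q⁻¹ - q) * mu d (q + q⁻¹) := by
      rw [h, ← mul_le_mul_iff_of_pos_right hqd1]
      have e1 : (q⁻¹ - q) * (q ^ d)⁻¹ * q ^ (d+1) = 1 - q^2 := by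
        field_simp
        ring
      have e2 : (q⁻¹ ^ (d+1) - q ^ (d+1)) * q ^ (d+1) = 1 - q^(2*d+2) := by
        rw [sub_mul, ← mul_pow, inv_mul_cancel₀ hq0.ne', one_pow, ← pow_add]
        ring
      rw [e1, e2]
      have := pow_le_pow_of_le_one hq0.le hq1.le (show 2 ≤ 2*d+2 by omega)
      linarith
    exact le_of_mul_le_mul_left key (by linarith)
  have hmu_pos : (0:ℝ) < mu d (q + q⁻¹) := lt_of_lt_of_le (by positivity) hmu_ge
  -- assemble
  rw [hinv]
  calc ‖mu d (t + t⁻¹)‖ ≤ 2 * q ^ (-z.re * ((d:ℝ) + 1)) / δ := hmu_norm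
  _ = (2 / δ * q ^ (-z.re)) * q ^ ((d:ℝ) * (1 - z.re)) * (q ^ d)⁻¹ := by
      rw [← Real.rpow_natCast q d, ← Real.rpow_neg hq0.le,
        show -z.re * ((d:ℝ) + 1) = -z.re + ((d:ℝ) * (1 - z.re) + -(d:ℝ)) by ring,
        Real.rpow_add hq0, Real.rpow_add hq0]
      ring
  _ ≤ (2 / δ * q ^ (-z.re)) * q ^ ((d:ℝ) * (1 - z.re)) * mu d (q + q⁻¹) := by
      gcongr
end

section
/- Let q be a real number with 0 < q < 1 and let z ∈ ℂ. Then for every n ≥ 1, (q^z + q^{−z}) · p_n(z) = q^{−1} √(1 − q^{2(n+1)}) · p_{n+1}(z) + q √(1 − q^{2n}) · p_{n−1}(z), and for n = 0, (q^z + q^{−z}) · p_0(z) = q^{−1} √(1 − q^2) · p_1(z). -/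
/-- The q-Pochhammer symbol `(x; q)_k = ∏_{j=0}^{k-1} (1 - x q^j)`. -/
noncomputable def qPoch (x q : ℝ) (k : ℕ) : ℝ := ∏ j ∈ Finset.range k, (1 - x * q ^ j)

/-- The q-binomial coefficient `[n, k]_q = (q; q)_n / ((q; q)_k (q; q)_{n-k})`. -/
noncomputable def qbinom (q : ℝ) (n k : ℕ) : ℝ :=
  qPoch q q n / (qPoch q q k * qPoch q q (n - k))

/-- `p_n(z) = (q^n / √((q²; q²)_n)) · Σ_{k=0}^{n} [n, k]_{q²} · q^{z(n-2k)}`. -/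
noncomputable def pfun (q : ℝ) (n : ℕ) (z : ℂ) : ℂ :=
  ((q ^ n / Real.sqrt (qPoch (q ^ 2) (q ^ 2) n) : ℝ) : ℂ) *
    ∑ k ∈ Finset.range (n + 1),
      (qbinom (q ^ 2) n k : ℂ) * cpw q (z * ((n : ℂ) - 2 * (k : ℂ)))

lemma qPoch_succ (x q : ℝ) (k : ℕ) : qPoch x q (k+1) = qPoch x q k * (1 - x * q ^ k) :=
  Finset.prod_range_succ _ _

lemma fac_pos {q : ℝ} (h0 : 0 < q) (h1 : q < 1) (k : ℕ) : 0 < 1 - q * q ^ k := by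
  have h := pow_lt_one₀ (le_of_lt h0) h1 (Nat.succ_ne_zero k)
  rw [pow_succ] at h
  nlinarith

lemma qPoch_pos {q : ℝ} (h0 : 0 < q) (h1 : q < 1) (k : ℕ) : 0 < qPoch q q k := by
  induction k with
  | zero => simp [qPoch]
  | succ n ih => rw [qPoch_succ]; exact mul_pos ih (fac_pos h0 h1 n)

lemma qPoch_zero (x q : ℝ) : qPoch x q 0 = 1 := by simp [qPoch]

lemma qbinom_zero (q : ℝ) (n : ℕ) (h : qPoch q q n ≠ 0) : qbinom q n 0 = 1 := by
  unfold qbinom; rw [Nat.sub_zero, qPoch_zero, one_mul, div_self h]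

lemma qbinom_self (q : ℝ) (n : ℕ) (h : qPoch q q n ≠ 0) : qbinom q n n = 1 := by
  unfold qbinom; rw [Nat.sub_self, qPoch_zero, mul_one, div_self h]

lemma qbinom_pascal {Q : ℝ} (h0 : 0 < Q) (h1 : Q < 1) (k d : ℕ) :
    qbinom Q (k+d+1) (k+1) + qbinom Q (k+d+1) k
      = qbinom Q (k+d+2) (k+1) + (1 - Q^(k+d+1)) * qbinom Q (k+d) k := by
  unfold qbinom
  have e1 : (k+d+1) - (k+1) = d := by omega
  have e2 : (k+d+1) - k = d+1 := by omega
  have e3 : (k+d+2) - (k+1) = d+1 := by omega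
  have e4 : (k+d) - k = d := by omega
  rw [e1, e2, e3, e4]
  rw [show k+d+2 = (k+d)+1+1 from rfl]
  rw [qPoch_succ Q Q ((k+d)+1), qPoch_succ Q Q (k+d), qPoch_succ Q Q k, qPoch_succ Q Q d]
  have hA := (qPoch_pos h0 h1 k).ne'
  have hB := (qPoch_pos h0 h1 d).ne'
  have hC := (qPoch_pos h0 h1 (k+d)).ne'
  have h1' := (fac_pos h0 h1 k).ne'
  have h2' := (fac_pos h0 h1 d).ne'
  field_simp
  ring

lemma cpw_add (q : ℝ) (a b : ℂ) : cpw q a * cpw q b = cpw q (a+b) := by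
  unfold cpw; rw [← Complex.exp_add]; ring_nf

lemma cpw_shift (q : ℝ) (w c c' : ℂ) (h : w + c = c') : cpw q w * cpw q c = cpw q c' := by
  rw [cpw_add, h]

lemma key (q : ℝ) (h0 : 0 < q) (h1 : q < 1) (z : ℂ) (m : ℕ) :
    (cpw q z + cpw q (-z)) *
      ∑ k ∈ Finset.range (m+1+1), (qbinom (q^2) (m+1) k : ℂ) * cpw q (z * (((m+1 : ℕ) : ℂ) - 2*(k : ℂ)))
    = ∑ k ∈ Finset.range (m+1+1+1), (qbinom (q^2) (m+1+1) k : ℂ) * cpw q (z * (((m+1+1 : ℕ) : ℂ) - 2*(k : ℂ)))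
      + ((1 - (q^2)^(m+1) : ℝ) : ℂ) *
        ∑ k ∈ Finset.range (m+1), (qbinom (q^2) m k : ℂ) * cpw q (z * (((m : ℕ) : ℂ) - 2*(k : ℂ))) := by
  have hQ0 : (0:ℝ) < q^2 := by positivity
  have hQ1 : q^2 < 1 := by nlinarith
  have hP : ∀ n : ℕ, qPoch (q^2) (q^2) n ≠ 0 := fun n => (qPoch_pos hQ0 hQ1 n).ne'
  set Q := q^2 with hQ
  set T : ℕ → ℂ := fun k => cpw q (z * (((m+2 : ℕ) : ℂ) - 2*(k : ℂ))) with hT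
  have L1 : ∑ k ∈ Finset.range (m+2+1), ((if k ≤ m+1 then qbinom Q (m+1) k else 0 : ℝ) : ℂ) * T k
      = cpw q z *
        ∑ k ∈ Finset.range (m+1+1), (qbinom Q (m+1) k : ℂ) * cpw q (z * (((m+1 : ℕ) : ℂ) - 2*(k : ℂ))) := by
    rw [Finset.sum_range_succ, if_neg (show ¬ (m+2 ≤ m+1) by omega)]
    simp only [Complex.ofReal_zero, zero_mul, add_zero]
    rw [Finset.mul_sum]
    refine Finset.sum_congr rfl fun k hk => ?_
    rw [if_pos (by have := Finset.mem_range.mp hk; omega), mul_left_comm,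
      cpw_shift q z _ (z * (((m+2 : ℕ) : ℂ) - 2*(k : ℂ))) (by push_cast; ring)]
  have L2 : ∑ k ∈ Finset.range (m+2+1), ((if 1 ≤ k then qbinom Q (m+1) (k-1) else 0 : ℝ) : ℂ) * T k
      = cpw q (-z) *
        ∑ k ∈ Finset.range (m+1+1), (qbinom Q (m+1) k : ℂ) * cpw q (z * (((m+1 : ℕ) : ℂ) - 2*(k : ℂ))) := by
    rw [Finset.sum_range_succ', if_neg (show ¬ (1 ≤ 0) by omega)]
    simp only [Complex.ofReal_zero, zero_mul, add_zero]
    rw [Finset.mul_sum]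
    refine Finset.sum_congr rfl fun k hk => ?_
    rw [if_pos (by omega), Nat.add_sub_cancel, mul_left_comm,
      cpw_shift q (-z) _ (z * (((m+2 : ℕ) : ℂ) - 2*((k+1 : ℕ) : ℂ))) (by push_cast; ring)]
  have R2 : ∑ k ∈ Finset.range (m+2+1),
        ((if 1 ≤ k ∧ k ≤ m+1 then (1 - Q^(m+1)) * qbinom Q m (k-1) else 0 : ℝ) : ℂ) * T k
      = ((1 - Q^(m+1) : ℝ) : ℂ) *
        ∑ k ∈ Finset.range (m+1), (qbinom Q m k : ℂ) * cpw q (z * (((m : ℕ) : ℂ) - 2*(k : ℂ))) := by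
    rw [Finset.sum_range_succ', if_neg (by omega)]
    simp only [Complex.ofReal_zero, zero_mul, add_zero]
    rw [Finset.sum_range_succ, if_neg (by omega)]
    simp only [Complex.ofReal_zero, zero_mul, add_zero]
    rw [Finset.mul_sum]
    refine Finset.sum_congr rfl fun k hk => ?_
    have hk' : k ≤ m := by have := Finset.mem_range.mp hk; omega
    rw [if_pos ⟨by omega, by omega⟩, Nat.add_sub_cancel]
    have hTk : T (k+1) = cpw q (z * (((m : ℕ) : ℂ) - 2*(k : ℂ))) := by
      simp only [hT]
      congr 1
      push_cast
      ring
    rw [hTk]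
    push_cast
    ring
  rw [add_mul, ← L1, ← L2, ← R2, ← Finset.sum_add_distrib, ← Finset.sum_add_distrib]
  refine Finset.sum_congr rfl fun k hk => ?_
  rw [← add_mul, ← add_mul, ← Complex.ofReal_add, ← Complex.ofReal_add]
  have H : ((if k ≤ m+1 then qbinom Q (m+1) k else 0) + (if 1 ≤ k then qbinom Q (m+1) (k-1) else 0) : ℝ)
      = qbinom Q (m+2) k + (if 1 ≤ k ∧ k ≤ m+1 then (1 - Q^(m+1)) * qbinom Q m (k-1) else 0) := by
    rcases Nat.eq_zero_or_pos k with rfl | hk1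
    · rw [if_pos (by omega), if_neg (by omega), if_neg (by omega),
        qbinom_zero _ _ (hP _), qbinom_zero _ _ (hP _)]
    · rcases eq_or_lt_of_le (show k ≤ m+2 by have := Finset.mem_range.mp hk; omega) with hk2 | hk2
      · subst hk2
        rw [if_neg (by omega), if_pos (by omega), if_neg (by omega),
          show m+2-1 = m+1 from rfl, qbinom_self _ _ (hP _), qbinom_self _ _ (hP _)]
        ring
      · obtain ⟨j, rfl⟩ : ∃ j, k = j + 1 := ⟨k - 1, by omega⟩
        obtain ⟨d, rfl⟩ : ∃ d, m = j + d := ⟨m - j, by omega⟩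
        rw [if_pos (by omega), if_pos (by omega), if_pos ⟨by omega, by omega⟩,
          Nat.add_sub_cancel]
        exact qbinom_pascal hQ0 hQ1 j d
    
  rw [H]

lemma sqrtP_pos {q : ℝ} (h0 : 0 < q) (h1 : q < 1) (n : ℕ) :
    0 < Real.sqrt (qPoch (q^2) (q^2) n) :=
  Real.sqrt_pos.mpr (qPoch_pos (by positivity) (by nlinarith) n)

lemma fac_pos' {q : ℝ} (h0 : 0 < q) (h1 : q < 1) (n : ℕ) : 0 < 1 - q^2 * (q^2)^n :=
  fac_pos (by positivity) (by nlinarith) n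

lemma const1 (q : ℝ) (h0 : 0 < q) (h1 : q < 1) (n : ℕ) :
    (q⁻¹ * Real.sqrt (1 - q^(2*(n+1)))) * (q^(n+1) / Real.sqrt (qPoch (q^2) (q^2) (n+1)))
      = q^n / Real.sqrt (qPoch (q^2) (q^2) n) := by
  have h2 : 1 - q^(2*(n+1)) = 1 - q^2 * (q^2)^n := by ring
  rw [h2, qPoch_succ, Real.sqrt_mul (qPoch_pos (by positivity) (by nlinarith) n).le]
  have hs := sqrtP_pos h0 h1 n
  have hf := Real.sqrt_pos.mpr (fac_pos' h0 h1 n)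
  field_simp
  ring

lemma const2 (q : ℝ) (h0 : 0 < q) (h1 : q < 1) (m : ℕ) :
    (q^(m+1) / Real.sqrt (qPoch (q^2) (q^2) (m+1))) * (1 - (q^2)^(m+1))
      = (q * Real.sqrt (1 - q^(2*(m+1)))) * (q^m / Real.sqrt (qPoch (q^2) (q^2) m)) := by
  have h2 : 1 - q^(2*(m+1)) = 1 - q^2 * (q^2)^m := by ring
  have h3 : (1 : ℝ) - (q^2)^(m+1) = 1 - q^2 * (q^2)^m := by ring
  rw [h2, h3, qPoch_succ, Real.sqrt_mul (qPoch_pos (by positivity) (by nlinarith) m).le]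
  have hs := sqrtP_pos h0 h1 m
  have hf0 := fac_pos' h0 h1 m
  have hf := Real.sqrt_pos.mpr hf0
  have hss : Real.sqrt (1 - q^2*(q^2)^m) * Real.sqrt (1 - q^2*(q^2)^m) = 1 - q^2*(q^2)^m :=
    Real.mul_self_sqrt hf0.le
  field_simp
  linear_combination (-(q^(m+1))) * hss

theorem stmt5 (q : ℝ) (hq0 : 0 < q) (hq1 : q < 1) (z : ℂ) :
    (∀ n : ℕ, 1 ≤ n →
      (cpw q z + cpw q (-z)) * pfun q n z =
        ((q⁻¹ * Real.sqrt (1 - q ^ (2 * (n + 1))) : ℝ) : ℂ) * pfun q (n + 1) z +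
          ((q * Real.sqrt (1 - q ^ (2 * n)) : ℝ) : ℂ) * pfun q (n - 1) z) ∧
    (cpw q z + cpw q (-z)) * pfun q 0 z =
      ((q⁻¹ * Real.sqrt (1 - q ^ 2) : ℝ) : ℂ) * pfun q 1 z := by
  constructor
  · intro n hn
    obtain ⟨m, rfl⟩ : ∃ m, n = m + 1 := ⟨n - 1, by omega⟩
    simp only [Nat.add_sub_cancel]
    unfold pfun
    have hk := key q hq0 hq1 z m
    have e1 : ((q⁻¹ * Real.sqrt (1 - q ^ (2 * (m + 1 + 1))) : ℝ) : ℂ) *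
        ((q ^ (m+1+1) / Real.sqrt (qPoch (q^2) (q^2) (m+1+1)) : ℝ) : ℂ)
        = ((q ^ (m+1) / Real.sqrt (qPoch (q^2) (q^2) (m+1)) : ℝ) : ℂ) := by
      rw [← Complex.ofReal_mul]
      exact_mod_cast congrArg Complex.ofReal (const1 q hq0 hq1 (m+1))
    have e2 : ((q ^ (m+1) / Real.sqrt (qPoch (q^2) (q^2) (m+1)) : ℝ) : ℂ) *
        ((1 - (q^2)^(m+1) : ℝ) : ℂ)
        = ((q * Real.sqrt (1 - q ^ (2 * (m + 1))) : ℝ) : ℂ) *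
          ((q ^ m / Real.sqrt (qPoch (q^2) (q^2) m) : ℝ) : ℂ) := by
      rw [← Complex.ofReal_mul, ← Complex.ofReal_mul]
      exact_mod_cast congrArg Complex.ofReal (const2 q hq0 hq1 m)
    linear_combination ((q ^ (m+1) / Real.sqrt (qPoch (q^2) (q^2) (m+1)) : ℝ) : ℂ) * hk
      - (∑ k ∈ Finset.range (m+1+1+1),
          (qbinom (q^2) (m+1+1) k : ℂ) * cpw q (z * (((m+1+1 : ℕ) : ℂ) - 2*(k : ℂ)))) * e1
      + (∑ k ∈ Finset.range (m+1),
          (qbinom (q^2) m k : ℂ) * cpw q (z * (((m : ℕ) : ℂ) - 2*(k : ℂ)))) * e2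
  · unfold pfun
    have hP1 : qPoch (q^2) (q^2) 1 = 1 - q^2 := by
      rw [show (1:ℕ) = 0 + 1 from rfl, qPoch_succ, qPoch_zero]; ring
    have hf : (0:ℝ) < 1 - q^2 := by nlinarith
    have hb0 : qbinom (q^2) 0 0 = 1 :=
      qbinom_zero _ _ (qPoch_pos (by positivity) (by nlinarith) 0).ne'
    have hb10 : qbinom (q^2) 1 0 = 1 :=
      qbinom_zero _ _ (qPoch_pos (by positivity) (by nlinarith) 1).ne'
    have hb11 : qbinom (q^2) 1 1 = 1 :=
      qbinom_self _ _ (qPoch_pos (by positivity) (by nlinarith) 1).ne'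
    rw [Finset.sum_range_succ, Finset.sum_range_succ, Finset.sum_range_one]
    rw [hb0, hb10, hb11, qPoch_zero, hP1]
    have h1 : cpw q (z * (((0:ℕ):ℂ) - 2 * ((0:ℕ):ℂ))) = 1 := by
      norm_num [cpw, Complex.exp_zero]
    have h2 : cpw q (z * (((1:ℕ):ℂ) - 2 * ((0:ℕ):ℂ))) = cpw q z := by
      norm_num [cpw]
    have h3 : cpw q (z * (((1:ℕ):ℂ) - 2 * ((1:ℕ):ℂ))) = cpw q (-z) := by
      unfold cpw; congr 1; push_cast; ring
    rw [h1, h2, h3]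
    have hc : ((q⁻¹ * Real.sqrt (1 - q^2) : ℝ) : ℂ) * ((q^1 / Real.sqrt (1 - q^2) : ℝ) : ℂ) = 1 := by
      rw [← Complex.ofReal_mul]
      have hs := Real.sqrt_pos.mpr hf
      have : (q⁻¹ * Real.sqrt (1 - q^2)) * (q^1 / Real.sqrt (1 - q^2)) = 1 := by
        field_simp
      rw [this, Complex.ofReal_one]
    have hone : ((q^0 / Real.sqrt 1 : ℝ) : ℂ) = 1 := by norm_num
    rw [hone, Finset.sum_range_zero,
      ← mul_assoc (((q⁻¹ * Real.sqrt (1 - q^2) : ℝ) : ℂ)), hc]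
    push_cast
    ring
end

section
/- Let q be a real number with 0 < q < 1 and let t ∈ ℝ with 0 < t < 1. Then there exists a constant C > 0 (depending only on q and t) such that for every n ∈ ℕ and every z ∈ ℂ with Re(z) = t, one has |p_n(z)| ≤ C · q^{(1−t) n}. -/
lemma factor_bounds {a : ℝ} (ha0 : 0 < a) (ha1 : a < 1) (j : ℕ) :
    0 < a * a ^ j ∧ a * a ^ j ≤ a := by
  constructor
  · positivity
  · nlinarith [pow_le_one₀ ha0.le ha1.le (n := j)]

lemma qPoch_pos_s6 {a : ℝ} (ha0 : 0 < a) (ha1 : a < 1) (k : ℕ) : 0 < qPoch a a k := by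
  apply Finset.prod_pos
  intro j _
  have h := factor_bounds ha0 ha1 j
  linarith [h.1, h.2]

lemma qPoch_le_one {a : ℝ} (ha0 : 0 < a) (ha1 : a < 1) (k : ℕ) : qPoch a a k ≤ 1 := by
  apply Finset.prod_le_one <;> intro j _ <;> have h := factor_bounds ha0 ha1 j
  · linarith [h.1, h.2]
  · linarith [h.1]

lemma qPoch_ge {a : ℝ} (ha0 : 0 < a) (ha1 : a < 1) (k : ℕ) :
    Real.exp (-(a / (1 - a) ^ 2)) ≤ qPoch a a k := by
  have ha' : 0 < 1 - a := by linarith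
  have step1 : ∀ j ∈ Finset.range k,
      Real.exp (-(a * a ^ j / (1 - a))) ≤ 1 - a * a ^ j := by
    intro j _
    obtain ⟨hx0, hxa⟩ := factor_bounds ha0 ha1 j
    set x := a * a ^ j with hxdef
    have hx1 : x < 1 := lt_of_le_of_lt hxa ha1
    have h1x : 0 < 1 - x := by linarith
    have key : Real.exp (-(x / (1 - x))) ≤ 1 - x := by
      have h := Real.add_one_le_exp (x / (1 - x))
      have hmul : (1 - x) * Real.exp (x / (1 - x)) ≥ 1 := by
        have h2 : (1 - x) * (x / (1 - x) + 1) = 1 := by field_simp; ring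
        nlinarith [Real.exp_pos (x / (1 - x))]
      have hprod : Real.exp (-(x / (1 - x))) * Real.exp (x / (1 - x)) = 1 := by
        rw [← Real.exp_add]; simp
      nlinarith [Real.exp_pos (-(x / (1 - x))), Real.exp_pos (x / (1 - x))]
    have hmono : Real.exp (-(x / (1 - a))) ≤ Real.exp (-(x / (1 - x))) := by
      apply Real.exp_le_exp.mpr
      have : x / (1 - x) ≤ x / (1 - a) := by
        apply div_le_div_of_nonneg_left hx0.le ha'
        linarith
      linarith
    exact hmono.trans key
  have hprodle : ∏ j ∈ Finset.range k, Real.exp (-(a * a ^ j / (1 - a))) ≤ qPoch a a k := by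
    apply Finset.prod_le_prod
    · intro j _; positivity
    · exact step1
  refine le_trans ?_ hprodle
  rw [← Real.exp_sum]
  apply Real.exp_le_exp.mpr
  have hsum : ∑ j ∈ Finset.range k, a * a ^ j ≤ a / (1 - a) := by
    have hg : ∑ j ∈ Finset.range k, a ^ j ≤ 1 / (1 - a) := by
      rw [geom_sum_eq ha1.ne]
      have hpk : 0 < a ^ k := pow_pos ha0 k
      have hpk1 : a ^ k ≤ 1 := pow_le_one₀ ha0.le ha1.le
      have heq : (a ^ k - 1) / (a - 1) = (1 - a ^ k) / (1 - a) := by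
        rw [← neg_div_neg_eq]; ring_nf
      rw [heq]
      gcongr
      nlinarith [pow_pos ha0 k]
    calc ∑ j ∈ Finset.range k, a * a ^ j = a * ∑ j ∈ Finset.range k, a ^ j := by
          rw [Finset.mul_sum]
      _ ≤ a * (1 / (1 - a)) := by
          apply mul_le_mul_of_nonneg_left hg ha0.le
      _ = a / (1 - a) := by ring
  have : ∑ j ∈ Finset.range k, -(a * a ^ j / (1 - a))
      = -((∑ j ∈ Finset.range k, a * a ^ j) / (1 - a)) := by
    simp [neg_div, ← Finset.sum_div]
  rw [this]
  have : (∑ j ∈ Finset.range k, a * a ^ j) / (1 - a) ≤ a / (1 - a) ^ 2 := by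
    rw [div_le_div_iff₀ ha' (by positivity)]
    nlinarith [(le_div_iff₀ ha').mp hsum, ha']
  linarith

lemma geom_bound {a : ℝ} (ha0 : 0 < a) (ha1 : a < 1) (k : ℕ) :
    ∑ j ∈ Finset.range k, a ^ j ≤ 1 / (1 - a) := by
  have ha' : 0 < 1 - a := by linarith
  rw [geom_sum_eq ha1.ne]
  have heq : (a ^ k - 1) / (a - 1) = (1 - a ^ k) / (1 - a) := by
    rw [← neg_div_neg_eq]; ring_nf
  rw [heq]
  gcongr
  nlinarith [pow_pos ha0 k]

lemma norm_cpw {q : ℝ} (hq0 : 0 < q) (z : ℂ) : ‖cpw q z‖ = q ^ z.re := by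
  unfold cpw
  rw [Complex.norm_exp, Real.rpow_def_of_pos hq0]
  congr 1
  simp [Complex.mul_re]
  ring

lemma qbinom_le {a : ℝ} (ha0 : 0 < a) (ha1 : a < 1) (n k : ℕ) :
    |qbinom a n k| ≤ 1 / (Real.exp (-(a / (1 - a) ^ 2))) ^ 2 := by
  set c := Real.exp (-(a / (1 - a) ^ 2)) with hc
  have hc0 : 0 < c := Real.exp_pos _
  have hden : 0 < qPoch a a k * qPoch a a (n - k) :=
    mul_pos (qPoch_pos_s6 ha0 ha1 k) (qPoch_pos_s6 ha0 ha1 (n - k))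
  unfold qbinom
  rw [abs_of_nonneg (div_nonneg (qPoch_pos_s6 ha0 ha1 n).le hden.le)]
  apply div_le_div₀ (by norm_num) (qPoch_le_one ha0 ha1 n) (by positivity)
  calc c ^ 2 = c * c := sq c
    _ ≤ qPoch a a k * qPoch a a (n - k) :=
        mul_le_mul (qPoch_ge ha0 ha1 k) (qPoch_ge ha0 ha1 (n - k)) hc0.le
          (qPoch_pos_s6 ha0 ha1 k).le

theorem stmt6 (q t : ℝ) (hq0 : 0 < q) (hq1 : q < 1) (ht0 : 0 < t) (ht1 : t < 1) :
    ∃ C : ℝ, 0 < C ∧ ∀ n : ℕ, ∀ z : ℂ, z.re = t →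
      ‖pfun q n z‖ ≤ C * q ^ ((1 - t) * (n : ℝ)) := by
  have ha0 : (0:ℝ) < q ^ 2 := by positivity
  have ha1 : q ^ 2 < 1 := by nlinarith
  set c := Real.exp (-(q ^ 2 / (1 - q ^ 2) ^ 2)) with hc
  have hc0 : 0 < c := Real.exp_pos _
  set s := q ^ (2 * t) with hs
  have hs0 : 0 < s := Real.rpow_pos_of_pos hq0 _
  have hs1 : s < 1 := Real.rpow_lt_one hq0.le hq1 (by linarith)
  have h1s : (0:ℝ) < 1 - s := by linarith
  refine ⟨(1 / Real.sqrt c) * ((1 / c ^ 2) * (1 / (1 - s))), by positivity, ?_⟩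
  intro n z hz
  have hsplit : ∀ k : ℕ, k ≤ n →
      q ^ (t * ((n : ℝ) - 2 * k)) = q ^ (-(t * (n : ℝ))) * s ^ (n - k) := by
    intro k hk
    have hcast : ((n - k : ℕ) : ℝ) = (n : ℝ) - k := by
      rw [Nat.cast_sub hk]
    conv_rhs => rw [hs, ← Real.rpow_natCast (q ^ (2 * t)) (n - k),
      ← Real.rpow_mul hq0.le, ← Real.rpow_add hq0]
    congr 1
    rw [hcast]; ring
  have hterm : ∀ k ∈ Finset.range (n + 1),
      ‖(qbinom (q ^ 2) n k : ℂ) * cpw q (z * ((n : ℂ) - 2 * (k : ℂ)))‖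
        ≤ (1 / c ^ 2) * (q ^ (-(t * (n : ℝ))) * s ^ (n - k)) := by
    intro k hk
    have hk' : k ≤ n := Nat.lt_succ_iff.mp (Finset.mem_range.mp hk)
    have hre : (z * ((n : ℂ) - 2 * (k : ℂ))).re = t * ((n : ℝ) - 2 * k) := by
      simp [Complex.mul_re, hz]
    rw [norm_mul, Complex.norm_real, norm_cpw hq0, hre, hsplit k hk']
    exact mul_le_mul_of_nonneg_right (qbinom_le ha0 ha1 n k)
      (mul_nonneg (Real.rpow_pos_of_pos hq0 _).le (pow_nonneg hs0.le _))
  have hrefl : ∑ k ∈ Finset.range (n + 1), s ^ (n - k)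
      = ∑ j ∈ Finset.range (n + 1), s ^ j := by
    have := Finset.sum_range_reflect (fun j => s ^ j) (n + 1)
    simpa using this
  have hsumnorm : ‖∑ k ∈ Finset.range (n + 1),
        (qbinom (q ^ 2) n k : ℂ) * cpw q (z * ((n : ℂ) - 2 * (k : ℂ)))‖
      ≤ (1 / c ^ 2) * (q ^ (-(t * (n : ℝ))) * (1 / (1 - s))) := by
    calc ‖∑ k ∈ Finset.range (n + 1),
          (qbinom (q ^ 2) n k : ℂ) * cpw q (z * ((n : ℂ) - 2 * (k : ℂ)))‖
        ≤ ∑ k ∈ Finset.range (n + 1),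
            ‖(qbinom (q ^ 2) n k : ℂ) * cpw q (z * ((n : ℂ) - 2 * (k : ℂ)))‖ :=
          norm_sum_le _ _
      _ ≤ ∑ k ∈ Finset.range (n + 1),
            (1 / c ^ 2) * (q ^ (-(t * (n : ℝ))) * s ^ (n - k)) :=
          Finset.sum_le_sum hterm
      _ = (1 / c ^ 2) * (q ^ (-(t * (n : ℝ))) *
            ∑ k ∈ Finset.range (n + 1), s ^ (n - k)) := by
          rw [← Finset.mul_sum, ← Finset.mul_sum]
      _ ≤ (1 / c ^ 2) * (q ^ (-(t * (n : ℝ))) * (1 / (1 - s))) := by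
          gcongr
          rw [hrefl]
          exact geom_bound hs0 hs1 (n + 1)
  have hpref : |q ^ n / Real.sqrt (qPoch (q ^ 2) (q ^ 2) n)|
      ≤ q ^ n / Real.sqrt c := by
    rw [abs_of_nonneg (by positivity)]
    gcongr
    exact qPoch_ge ha0 ha1 n
  have hqq : (q : ℝ) ^ n * q ^ (-(t * (n : ℝ))) = q ^ ((1 - t) * (n : ℝ)) := by
    rw [← Real.rpow_natCast q n, ← Real.rpow_add hq0]
    congr 1; ring
  calc ‖pfun q n z‖
      = |q ^ n / Real.sqrt (qPoch (q ^ 2) (q ^ 2) n)| *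
          ‖∑ k ∈ Finset.range (n + 1),
            (qbinom (q ^ 2) n k : ℂ) * cpw q (z * ((n : ℂ) - 2 * (k : ℂ)))‖ := by
        rw [pfun, norm_mul, Complex.norm_real, Real.norm_eq_abs]
    _ ≤ (q ^ n / Real.sqrt c) *
          ((1 / c ^ 2) * (q ^ (-(t * (n : ℝ))) * (1 / (1 - s)))) :=
        mul_le_mul hpref hsumnorm (norm_nonneg _) (by positivity)
    _ = (1 / Real.sqrt c) * ((1 / c ^ 2) * (1 / (1 - s))) *
          (q ^ n * q ^ (-(t * (n : ℝ)))) := by ring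
    _ = (1 / Real.sqrt c) * ((1 / c ^ 2) * (1 / (1 - s))) * q ^ ((1 - t) * (n : ℝ)) := by
        rw [hqq]
end

section
/- Let q be a real number with 0 < q < 1 and let z ∈ ℂ with −1 < Re(z) < 1. Then the sequence (p_n(z))_{n ∈ ℕ} is square summable: Σ_{n=0}^{∞} |p_n(z)|² < ∞. -/
lemma qPoch_pos_s7 {r : ℝ} (hr0 : 0 < r) (hr1 : r < 1) (n : ℕ) : 0 < qPoch r r n := by
  apply Finset.prod_pos
  intro j _
  have h1 : r * r ^ j ≤ r * 1 := by
    apply mul_le_mul_of_nonneg_left _ hr0.le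
    exact pow_le_one₀ hr0.le hr1.le
  linarith

lemma qPoch_le_one_s7 {r : ℝ} (hr0 : 0 < r) (hr1 : r < 1) (n : ℕ) : qPoch r r n ≤ 1 := by
  apply Finset.prod_le_one
  · intro j _
    have h1 : r * r ^ j ≤ r * 1 := by
      apply mul_le_mul_of_nonneg_left _ hr0.le
      exact pow_le_one₀ hr0.le hr1.le
    linarith
  · intro j _
    have := mul_nonneg hr0.le (pow_nonneg hr0.le j)
    linarith

lemma qPoch_ge_s7 {r : ℝ} (hr0 : 0 < r) (hr1 : r < 1) (n : ℕ) :
    Real.exp (-(r / (1 - r) ^ 2)) ≤ qPoch r r n := by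
  have h1r : 0 < 1 - r := by linarith
  have step : ∀ j ∈ Finset.range n, Real.exp (-(r ^ (j + 1) / (1 - r))) ≤ 1 - r * r ^ j := by
    intro j _
    have hx0 : 0 < r ^ (j + 1) := pow_pos hr0 _
    have hxr : r ^ (j + 1) ≤ r := by
      calc r ^ (j+1) ≤ r ^ 1 := pow_le_pow_of_le_one hr0.le hr1.le (by omega)
      _ = r := pow_one r
    set x := r ^ (j + 1) with hxdef
    have hy : 0 < x / (1 - r) := div_pos hx0 h1r
    have h2 : 1 + x / (1-r) ≤ Real.exp (x / (1-r)) := by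
      have := Real.add_one_le_exp (x / (1-r)); linarith
    have h3 : Real.exp (-(x / (1-r))) = (Real.exp (x / (1-r)))⁻¹ := by
      rw [Real.exp_neg]
    have hepos : (0:ℝ) < Real.exp (x / (1-r)) := Real.exp_pos _
    have h4 : Real.exp (-(x / (1-r))) ≤ (1 + x / (1-r))⁻¹ := by
      rw [h3]
      exact inv_anti₀ (by linarith) h2
    have h5 : (1 + x / (1-r))⁻¹ ≤ 1 - x := by
      rw [inv_le_iff_one_le_mul₀ (by positivity)]
      have heq : (1 - x) * (1 + x / (1-r)) = ((1-x) * ((1-r) + x)) / (1-r) := by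
        field_simp
      rw [heq, le_div_iff₀ h1r]
      nlinarith
    have hrw : r * r ^ j = x := by rw [hxdef]; ring
    rw [hrw]
    linarith
  have hprod : ∏ j ∈ Finset.range n, Real.exp (-(r ^ (j + 1) / (1 - r))) ≤ qPoch r r n := by
    apply Finset.prod_le_prod (fun j _ => (Real.exp_pos _).le) step
  refine le_trans ?_ hprod
  rw [← Real.exp_sum]
  apply Real.exp_le_exp.2
  rw [show (∑ j ∈ Finset.range n, -(r ^ (j + 1) / (1 - r)))
      = -(∑ j ∈ Finset.range n, r ^ (j + 1) / (1 - r)) by rw [Finset.sum_neg_distrib]]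
  rw [neg_le_neg_iff]
  have hsum : ∑ j ∈ Finset.range n, r ^ (j + 1) / (1 - r)
      = (∑ j ∈ Finset.range n, r ^ j) * (r / (1-r)) := by
    rw [Finset.sum_mul]
    apply Finset.sum_congr rfl
    intro j _
    field_simp
    ring
  rw [hsum]
  have hgeo : ∑ j ∈ Finset.range n, r ^ j ≤ 1 / (1 - r) := by
    rw [le_div_iff₀ h1r]
    have h := geom_sum_mul r n
    nlinarith [pow_nonneg hr0.le n]
  calc (∑ j ∈ Finset.range n, r ^ j) * (r / (1-r)) ≤ (1/(1-r)) * (r/(1-r)) :=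
        mul_le_mul_of_nonneg_right hgeo (by positivity)
    _ = r / (1-r)^2 := by rw [div_mul_div_comm, one_mul, sq]


theorem stmt7 (q : ℝ) (hq0 : 0 < q) (hq1 : q < 1) (z : ℂ)
    (hz0 : -1 < z.re) (hz1 : z.re < 1) :
    Summable (fun n : ℕ => ‖pfun q n z‖ ^ 2) := by
  have hr0 : (0:ℝ) < q ^ 2 := by positivity
  have hr1 : q ^ 2 < 1 := by nlinarith
  set r : ℝ := q ^ 2 with hrdef
  set c : ℝ := Real.exp (-(r / (1 - r) ^ 2)) with hcdef
  have hc0 : 0 < c := Real.exp_pos _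
  set t : ℝ := |z.re| with htdef
  have ht : t < 1 := abs_lt.2 ⟨hz0, hz1⟩
  have ht0 : 0 ≤ t := abs_nonneg _
  set L : ℝ := Real.log q with hLdef
  have hLneg : L < 0 := Real.log_neg hq0 hq1
  set s : ℝ := Real.exp ((1 - t) * L) with hsdef
  have hs0 : 0 < s := Real.exp_pos _
  have hs1 : s < 1 := by
    rw [hsdef]
    have : (1 - t) * L < 0 := mul_neg_of_pos_of_neg (by linarith) hLneg
    exact Real.exp_lt_one_iff.2 this
  set B : ℝ := 1 / (c ^ 2 * Real.sqrt c) with hBdef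
  have hB0 : 0 < B := by rw [hBdef]; positivity
  -- key pointwise bound
  have key : ∀ n : ℕ, ‖pfun q n z‖ ≤ ((n:ℝ) + 1) * B * s ^ n := by
    intro n
    have hPn := qPoch_pos_s7 hr0 hr1 n
    have hPc := qPoch_ge_s7 hr0 hr1 n
    set E : ℝ := Real.exp (t * n * (-L)) with hEdef
    have hE0 : 0 < E := Real.exp_pos _
    -- termwise bound
    have hterm : ∀ k ∈ Finset.range (n + 1),
        ‖(qbinom r n k : ℂ) * cpw q (z * ((n : ℂ) - 2 * (k : ℂ)))‖ ≤ (1 / c ^ 2) * E := by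
      intro k hk
      have hkn : (k:ℝ) ≤ n := by
        exact_mod_cast Nat.lt_succ_iff.mp (Finset.mem_range.1 hk)
      have hk0 : (0:ℝ) ≤ k := Nat.cast_nonneg k
      have hqb0 : 0 ≤ qbinom r n k := by
        unfold qbinom
        have := qPoch_pos_s7 hr0 hr1 k
        have := qPoch_pos_s7 hr0 hr1 (n - k)
        positivity
      have hqb : qbinom r n k ≤ 1 / c ^ 2 := by
        unfold qbinom
        have h1 : c * c ≤ qPoch r r k * qPoch r r (n - k) :=
          mul_le_mul (qPoch_ge_s7 hr0 hr1 k) (qPoch_ge_s7 hr0 hr1 (n-k)) hc0.le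
            (qPoch_pos_s7 hr0 hr1 k).le
        calc qPoch r r n / (qPoch r r k * qPoch r r (n - k))
            ≤ 1 / (c * c) :=
              div_le_div₀ zero_le_one (qPoch_le_one_s7 hr0 hr1 n) (by positivity) h1
          _ = 1 / c ^ 2 := by rw [sq]
      have hre : (z * ((n : ℂ) - 2 * (k : ℂ)) * (L:ℂ)).re = z.re * ((n:ℝ) - 2 * k) * L := by
        have hcast : ((n : ℂ) - 2 * (k : ℂ)) = (((n:ℝ) - 2 * k : ℝ) : ℂ) := by push_cast; ring
        rw [hcast]
        simp [Complex.mul_re, Complex.ofReal_re, Complex.ofReal_im]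
      have hnorm : ‖cpw q (z * ((n : ℂ) - 2 * (k : ℂ)))‖
          = Real.exp (z.re * ((n:ℝ) - 2 * k) * L) := by
        rw [cpw, Complex.norm_exp, hre]
      have habs : |(n:ℝ) - 2 * k| ≤ n := by
        rw [abs_le]; constructor <;> nlinarith
      have hexp : z.re * ((n:ℝ) - 2 * k) * L ≤ t * n * (-L) := by
        calc z.re * ((n:ℝ) - 2 * k) * L ≤ |z.re * ((n:ℝ) - 2 * k) * L| := le_abs_self _
          _ = t * |(n:ℝ) - 2 * k| * (-L) := by
              rw [abs_mul, abs_mul, abs_of_neg hLneg]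
          _ ≤ t * n * (-L) := by
              apply mul_le_mul_of_nonneg_right _ (by linarith)
              exact mul_le_mul_of_nonneg_left habs ht0
      rw [norm_mul, Complex.norm_real, hnorm, Real.norm_of_nonneg hqb0]
      exact mul_le_mul hqb (Real.exp_le_exp.2 hexp) (Real.exp_pos _).le (by positivity)
    -- sum bound
    have hsum : ‖∑ k ∈ Finset.range (n + 1),
        (qbinom r n k : ℂ) * cpw q (z * ((n : ℂ) - 2 * (k : ℂ)))‖
        ≤ ((n:ℝ) + 1) * ((1 / c ^ 2) * E) := by
      calc ‖∑ k ∈ Finset.range (n + 1),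
            (qbinom r n k : ℂ) * cpw q (z * ((n : ℂ) - 2 * (k : ℂ)))‖
          ≤ ∑ k ∈ Finset.range (n + 1),
            ‖(qbinom r n k : ℂ) * cpw q (z * ((n : ℂ) - 2 * (k : ℂ)))‖ := norm_sum_le _ _
        _ ≤ ∑ _k ∈ Finset.range (n + 1), (1 / c ^ 2) * E := Finset.sum_le_sum hterm
        _ = ((n:ℝ) + 1) * ((1 / c ^ 2) * E) := by
            rw [Finset.sum_const, Finset.card_range, nsmul_eq_mul]; push_cast; ring
    -- coefficient bound
    have hcoef : q ^ n / Real.sqrt (qPoch r r n) ≤ q ^ n / Real.sqrt c := by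
      apply div_le_div_of_nonneg_left (by positivity) (Real.sqrt_pos.2 hc0)
      exact Real.sqrt_le_sqrt hPc
    have hqE : q ^ n * E = s ^ n := by
      have hq : q = Real.exp L := (Real.exp_log hq0).symm
      rw [hEdef, hsdef, hq, ← Real.exp_nat_mul, ← Real.exp_nat_mul, ← Real.exp_add,
        Real.exp_eq_exp]
      ring
    have hcoef0 : 0 ≤ q ^ n / Real.sqrt (qPoch r r n) := by positivity
    calc ‖pfun q n z‖
        = (q ^ n / Real.sqrt (qPoch r r n)) *
          ‖∑ k ∈ Finset.range (n + 1),
            (qbinom r n k : ℂ) * cpw q (z * ((n : ℂ) - 2 * (k : ℂ)))‖ := by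
          rw [pfun, norm_mul, Complex.norm_real, Real.norm_of_nonneg hcoef0]
      _ ≤ (q ^ n / Real.sqrt c) * (((n:ℝ) + 1) * ((1 / c ^ 2) * E)) := by
          apply mul_le_mul hcoef hsum (norm_nonneg _) (by positivity)
      _ = ((n:ℝ) + 1) * B * (q ^ n * E) := by
          rw [hBdef]; field_simp
      _ = ((n:ℝ) + 1) * B * s ^ n := by rw [hqE]
  -- summability
  have hx1 : |s ^ 2| < 1 := by
    rw [abs_of_pos (by positivity)]; nlinarith
  have hmaj : Summable (fun n : ℕ => B ^ 2 * (((n:ℝ) + 1) ^ 2 * (s ^ 2) ^ n)) := by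
    apply Summable.mul_left
    have h2 : Summable (fun n : ℕ => (n:ℝ) ^ 2 * (s ^ 2) ^ n) := by
      simpa using summable_pow_mul_geometric_of_norm_lt_one 2 (by simpa using hx1)
    have h1 : Summable (fun n : ℕ => (n:ℝ) ^ 1 * (s ^ 2) ^ n) := by
      simpa using summable_pow_mul_geometric_of_norm_lt_one 1 (by simpa using hx1)
    have h0 : Summable (fun n : ℕ => (s ^ 2) ^ n) :=
      summable_geometric_of_lt_one (by positivity) (by nlinarith)
    have := (h2.add ((h1.mul_left 2).add h0))
    refine this.congr fun n => ?_
    push_cast; ring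
  apply Summable.of_nonneg_of_le (fun n => by positivity) _ hmaj
  intro n
  have h := key n
  calc ‖pfun q n z‖ ^ 2 ≤ (((n:ℝ) + 1) * B * s ^ n) ^ 2 := by
        apply pow_le_pow_left₀ (norm_nonneg _) h
    _ = B ^ 2 * (((n:ℝ) + 1) ^ 2 * (s ^ 2) ^ n) := by ring
end

section
/- Let q be a real number with 0 < q < 1, and let 𝒟 = {z ∈ ℂ : −1 < Re(z) < 1}. Then the map η : 𝒟 → ℓ²(ℕ; ℂ) defined by η(z) = (p_n(z))_{n ∈ ℕ} is well defined and holomorphic (complex differentiable at every point of 𝒟 as a map into the Banach space ℓ²(ℕ; ℂ)). -/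
/- Auxiliary lemmas -/

/-- Weierstrass product inequality. -/
lemma weier (s : Finset ℕ) (f : ℕ → ℝ) (h0 : ∀ j, 0 ≤ f j) (h1 : ∀ j, f j ≤ 1) :
    1 - ∑ j ∈ s, f j ≤ ∏ j ∈ s, (1 - f j) := by
  classical
  induction s using Finset.cons_induction with
  | empty => simp
  | cons a s ha ih =>
    rw [Finset.sum_cons, Finset.prod_cons]
    have hS : 0 ≤ ∑ j ∈ s, f j := Finset.sum_nonneg fun j _ => h0 j
    nlinarith [h0 a, h1 a, mul_nonneg hS (h0 a)]

lemma qPoch_pos_s9 {t : ℝ} (ht0 : 0 < t) (ht1 : t < 1) (n : ℕ) : 0 < qPoch t t n := by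
  apply Finset.prod_pos
  intro j _
  have : t * t ^ j ≤ t * 1 := by
    apply mul_le_mul_of_nonneg_left _ ht0.le
    exact pow_le_one₀ ht0.le ht1.le
  linarith

lemma qPoch_le_one_s9 {t : ℝ} (ht0 : 0 < t) (ht1 : t < 1) (n : ℕ) : qPoch t t n ≤ 1 := by
  apply Finset.prod_le_one
  · intro j _
    have h1 : t * t ^ j ≤ t * 1 := by
      apply mul_le_mul_of_nonneg_left _ ht0.le
      exact pow_le_one₀ ht0.le ht1.le
    linarith
  · intro j _
    have : 0 < t * t ^ j := mul_pos ht0 (pow_pos ht0 j)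
    linarith

lemma qPoch_anti {t : ℝ} (ht0 : 0 < t) (ht1 : t < 1) {m n : ℕ} (h : m ≤ n) :
    qPoch t t n ≤ qPoch t t m := by
  unfold qPoch
  rw [Finset.range_eq_Ico, ← Finset.prod_Ico_consecutive _ (Nat.zero_le m) h]
  have hpos : 0 < ∏ j ∈ Finset.Ico 0 m, (1 - t * t ^ j) := by
    rw [← Finset.range_eq_Ico]; exact qPoch_pos_s9 ht0 ht1 m
  have htail : ∏ j ∈ Finset.Ico m n, (1 - t * t ^ j) ≤ 1 := by
    apply Finset.prod_le_one
    · intro j _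
      have h1 : t * t ^ j ≤ t * 1 := by
        apply mul_le_mul_of_nonneg_left _ ht0.le
        exact pow_le_one₀ ht0.le ht1.le
      linarith
    · intro j _
      have : 0 < t * t ^ j := mul_pos ht0 (pow_pos ht0 j)
      linarith
  rw [← Finset.range_eq_Ico] at *
  nlinarith

/-- Uniform positive lower bound for the q-Pochhammer symbols. -/
lemma qPoch_lower {t : ℝ} (ht0 : 0 < t) (ht1 : t < 1) :
    ∃ c : ℝ, 0 < c ∧ ∀ n, c ≤ qPoch t t n := by
  -- choose J with t^(J+1)/(1-t) ≤ 1/2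
  have h1t : 0 < 1 - t := by linarith
  obtain ⟨J, hJ⟩ : ∃ J : ℕ, t ^ (J + 1) < (1 - t) / 2 := by
    obtain ⟨J, hJ⟩ := exists_pow_lt_of_lt_one (by positivity : (0:ℝ) < (1 - t)/2) ht1
    exact ⟨J, lt_of_le_of_lt (pow_le_pow_of_le_one ht0.le ht1.le (Nat.le_succ J)) hJ⟩
  refine ⟨qPoch t t J / 2, div_pos (qPoch_pos_s9 ht0 ht1 J) two_pos, fun n => ?_⟩
  rcases le_total n J with h | h
  · have := qPoch_anti ht0 ht1 h
    have := qPoch_pos_s9 ht0 ht1 J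
    linarith
  · -- split the product
    have hsplit : qPoch t t n = qPoch t t J * ∏ j ∈ Finset.Ico J n, (1 - t * t ^ j) := by
      unfold qPoch
      rw [Finset.range_eq_Ico, ← Finset.prod_Ico_consecutive _ (Nat.zero_le J) h]
      rw [← Finset.range_eq_Ico]
    have hsum : ∑ j ∈ Finset.Ico J n, t * t ^ j ≤ 1 / 2 := by
      have : ∑ j ∈ Finset.Ico J n, t * t ^ j = t ^ (J+1) * ∑ i ∈ Finset.range (n - J), t ^ i := by
        rw [Finset.sum_Ico_eq_sum_range, Finset.mul_sum]
        apply Finset.sum_congr rfl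
        intro i _
        rw [pow_add, pow_add]
        ring
      rw [this]
      have hgeom : ∑ i ∈ Finset.range (n - J), t ^ i ≤ 1 / (1 - t) := by
        have heq : (t ^ (n - J) - 1) / (t - 1) = (1 - t ^ (n - J)) / (1 - t) := by
          rw [← neg_div_neg_eq]; ring_nf
        rw [geom_sum_eq ht1.ne, heq, div_le_div_iff₀ h1t h1t]
        nlinarith [pow_nonneg ht0.le (n - J)]
      calc t ^ (J+1) * ∑ i ∈ Finset.range (n - J), t ^ i
          ≤ ((1 - t)/2) * (1 / (1 - t)) := by
            apply mul_le_mul hJ.le hgeom (Finset.sum_nonneg fun i _ => by positivity)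
            positivity
        _ = 1 / 2 := by field_simp
    have htail : (1:ℝ)/2 ≤ ∏ j ∈ Finset.Ico J n, (1 - t * t ^ j) := by
      have := weier (Finset.Ico J n) (fun j => t * t ^ j)
        (fun j => by positivity)
        (fun j => by
          have h1 : t * t ^ j ≤ t * 1 := by
            apply mul_le_mul_of_nonneg_left _ ht0.le
            exact pow_le_one₀ ht0.le ht1.le
          show t * t ^ j ≤ 1
          linarith)
      linarith
    have hJpos := qPoch_pos_s9 ht0 ht1 J
    rw [hsplit]
    nlinarith

lemma cpw_norm (q : ℝ) (z : ℂ) : ‖cpw q z‖ = Real.exp (z.re * Real.log q) := by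
  rw [cpw, Complex.norm_exp]
  congr 1
  simp [Complex.mul_re]

lemma qbinom_bound {t : ℝ} (ht0 : 0 < t) (ht1 : t < 1) {c : ℝ} (hc : 0 < c)
    (hcle : ∀ n, c ≤ qPoch t t n) (n k : ℕ) :
    |qbinom t n k| ≤ 1 / c ^ 2 := by
  have h1 := qPoch_pos_s9 ht0 ht1 n
  have h2 := hcle k
  have h3 := hcle (n - k)
  have h4 := qPoch_le_one_s9 ht0 ht1 n
  have hk := qPoch_pos_s9 ht0 ht1 k
  have hnk := qPoch_pos_s9 ht0 ht1 (n - k)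
  have h0 : (0:ℝ) ≤ qbinom t n k := div_nonneg h1.le (mul_nonneg hk.le hnk.le)
  rw [abs_of_nonneg h0, qbinom, div_le_div_iff₀ (mul_pos hk hnk) (pow_pos hc 2)]
  nlinarith [mul_le_mul h2 h3 hc.le (le_trans hc.le h2)]

/-- Main norm bound for `pfun` on a strip. -/
lemma pfun_bound (q r : ℝ) (hq0 : 0 < q) (hq1 : q < 1) (hr0 : 0 ≤ r) (hr1 : r < 1)
    {c : ℝ} (hc : 0 < c) (hc1 : c ≤ 1) (hcle : ∀ n, c ≤ qPoch (q ^ 2) (q ^ 2) n)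
    (n : ℕ) (z : ℂ) (hz : |z.re| ≤ r) :
    ‖pfun q n z‖ ≤ (1 / (c ^ 2 * Real.sqrt c)) *
      ((n + 1) * (Real.exp ((1 - r) * Real.log q)) ^ n) := by
  have ht0 : 0 < q ^ 2 := by positivity
  have ht1 : q ^ 2 < 1 := by nlinarith
  have hlq : Real.log q < 0 := Real.log_neg hq0 hq1
  set E : ℝ := Real.exp (r * n * (-Real.log q)) with hE
  have hterm : ∀ k ∈ Finset.range (n + 1),
      ‖(qbinom (q ^ 2) n k : ℂ) * cpw q (z * ((n : ℂ) - 2 * (k : ℂ)))‖ ≤ (1 / c ^ 2) * E := by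
    intro k hk
    have hk' : k ≤ n := Nat.lt_succ_iff.mp (Finset.mem_range.mp hk)
    rw [norm_mul, Complex.norm_real, cpw_norm]
    have hre : (z * ((n : ℂ) - 2 * (k : ℂ))).re = z.re * ((n : ℝ) - 2 * k) := by
      simp [Complex.mul_re]
    rw [hre]
    have hd : |(n : ℝ) - 2 * k| ≤ (n : ℝ) := by
      rw [abs_le]
      constructor
      · have : (k : ℝ) ≤ n := by exact_mod_cast hk'
        linarith
      · have : (0:ℝ) ≤ k := Nat.cast_nonneg k
        linarith
    have hexp : z.re * ((n : ℝ) - 2 * k) * Real.log q ≤ r * n * (-Real.log q) := by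
      calc z.re * ((n : ℝ) - 2 * k) * Real.log q
          ≤ |z.re * ((n : ℝ) - 2 * k) * Real.log q| := le_abs_self _
        _ = |z.re| * |(n : ℝ) - 2 * k| * (-Real.log q) := by
            rw [abs_mul, abs_mul, abs_of_nonpos hlq.le]
        _ ≤ r * n * (-Real.log q) := by
            apply mul_le_mul_of_nonneg_right _ (by linarith)
            exact mul_le_mul hz hd (abs_nonneg _) hr0
    exact mul_le_mul (qbinom_bound ht0 ht1 hc hcle n k)
      (Real.exp_le_exp.mpr hexp) (Real.exp_nonneg _) (by positivity)
  have hsum : ‖∑ k ∈ Finset.range (n + 1),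
      (qbinom (q ^ 2) n k : ℂ) * cpw q (z * ((n : ℂ) - 2 * (k : ℂ)))‖
      ≤ (n + 1) * ((1 / c ^ 2) * E) := by
    calc ‖∑ k ∈ Finset.range (n + 1), (qbinom (q ^ 2) n k : ℂ) * cpw q (z * ((n : ℂ) - 2 * (k : ℂ)))‖
        ≤ ∑ k ∈ Finset.range (n + 1), ‖(qbinom (q ^ 2) n k : ℂ) * cpw q (z * ((n : ℂ) - 2 * (k : ℂ)))‖ :=
          norm_sum_le _ _
      _ ≤ ∑ k ∈ Finset.range (n + 1), (1 / c ^ 2) * E := Finset.sum_le_sum hterm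
      _ = (n + 1) * ((1 / c ^ 2) * E) := by
          rw [Finset.sum_const, Finset.card_range]
          push_cast
          ring
  have hP := qPoch_pos_s9 ht0 ht1 n
  have hPc := hcle n
  have hsq : Real.sqrt c ≤ Real.sqrt (qPoch (q ^ 2) (q ^ 2) n) := Real.sqrt_le_sqrt hPc
  have hsqc : 0 < Real.sqrt c := Real.sqrt_pos.mpr hc
  have hcoef : |q ^ n / Real.sqrt (qPoch (q ^ 2) (q ^ 2) n)| ≤ q ^ n / Real.sqrt c := by
    rw [abs_of_nonneg (by positivity)]
    apply div_le_div_of_nonneg_left (by positivity) hsqc hsq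
  rw [pfun, norm_mul, Complex.norm_real]
  have hqE : q ^ n * E = (Real.exp ((1 - r) * Real.log q)) ^ n := by
    have h1 : q ^ n = Real.exp ((n : ℝ) * Real.log q) := by
      rw [Real.exp_nat_mul, Real.exp_log hq0]
    rw [h1, hE, ← Real.exp_add, ← Real.exp_nat_mul]
    congr 1
    ring
  calc |q ^ n / Real.sqrt (qPoch (q ^ 2) (q ^ 2) n)| *
      ‖∑ k ∈ Finset.range (n + 1), (qbinom (q ^ 2) n k : ℂ) * cpw q (z * ((n : ℂ) - 2 * (k : ℂ)))‖
      ≤ (q ^ n / Real.sqrt c) * ((n + 1) * ((1 / c ^ 2) * E)) := by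
        apply mul_le_mul hcoef hsum (norm_nonneg _) (by positivity)
    _ = (1 / (c ^ 2 * Real.sqrt c)) * ((n + 1) * (q ^ n * E)) := by
        field_simp
    _ = (1 / (c ^ 2 * Real.sqrt c)) * ((n + 1) * (Real.exp ((1 - r) * Real.log q)) ^ n) := by
        rw [hqE]

/-- Evaluation at a coordinate as a continuous linear map on `ℓ²`. -/
noncomputable def evCLM (m : ℕ) : lp (fun _ : ℕ => ℂ) 2 →L[ℂ] ℂ :=
  LinearMap.mkContinuous
    { toFun := fun f => f m
      map_add' := fun f g => rfl
      map_smul' := fun c f => rfl }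
    1 (fun f => by
      show ‖(f : ∀ _ : ℕ, ℂ) m‖ ≤ 1 * ‖f‖
      simpa using lp.norm_apply_le_norm (by norm_num : (2 : ENNReal) ≠ 0) f m)

lemma evCLM_apply (m : ℕ) (f : lp (fun _ : ℕ => ℂ) 2) : evCLM m f = f m := rfl

lemma single_norm_one (n : ℕ) : ‖(lp.single 2 n (1 : ℂ) : lp (fun _ : ℕ => ℂ) 2)‖ = 1 := by
  have h2 : (0 : ENNReal) < 2 := by norm_num
  have := lp.norm_single (p := (2 : ENNReal)) (E := fun _ : ℕ => ℂ) h2 n (1 : ℂ)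
  simpa using this

lemma pfun_differentiable (q : ℝ) (n : ℕ) : Differentiable ℂ (fun z => pfun q n z) := by
  unfold pfun
  apply Differentiable.const_mul
  apply Differentiable.fun_sum
  intro k _
  apply Differentiable.const_mul
  unfold cpw
  apply Differentiable.cexp
  exact (differentiable_id.mul_const _).mul_const _

lemma rho_summable {ρ : ℝ} (h0 : 0 ≤ ρ) (h1 : ρ < 1) :
    Summable (fun n : ℕ => ((n : ℝ) + 1) * ρ ^ n) := by
  have h1' : ‖ρ‖ < 1 := by rwa [Real.norm_eq_abs, abs_of_nonneg h0]
  have hs1 : Summable (fun n : ℕ => (n : ℝ) * ρ ^ n) := by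
    simpa using summable_pow_mul_geometric_of_norm_lt_one 1 h1'
  have hs2 : Summable (fun n : ℕ => ρ ^ n) := summable_geometric_of_lt_one h0 h1
  simpa [add_mul] using hs1.add hs2

theorem stmt9 (q : ℝ) (hq0 : 0 < q) (hq1 : q < 1) :
    (∀ z : ℂ, -1 < z.re → z.re < 1 → Memℓp (fun n : ℕ => pfun q n z) 2) ∧
    ∃ η : ℂ → lp (fun _ : ℕ => ℂ) 2,
      (∀ z : ℂ, -1 < z.re → z.re < 1 → ∀ n : ℕ, (η z : ∀ _ : ℕ, ℂ) n = pfun q n z) ∧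
      (∀ z : ℂ, -1 < z.re → z.re < 1 → DifferentiableAt ℂ η z) := by
  have ht0 : 0 < q ^ 2 := by positivity
  have ht1 : q ^ 2 < 1 := by nlinarith
  obtain ⟨c, hc, hcle⟩ := qPoch_lower ht0 ht1
  have hc1 : c ≤ 1 := (hcle 0).trans (by simp [qPoch])
  have hlq : Real.log q < 0 := Real.log_neg hq0 hq1
  -- the terms of the series
  set F : ℕ → ℂ → lp (fun _ : ℕ => ℂ) 2 :=
    fun n z => pfun q n z • lp.single 2 n (1 : ℂ) with hF
  -- for each r < 1, a summable bound on the strip |Re z| ≤ r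
  set C : ℝ := 1 / (c ^ 2 * Real.sqrt c) with hC
  have hCpos : 0 < C := by
    have : 0 < Real.sqrt c := Real.sqrt_pos.mpr hc
    positivity
  have hbound : ∀ r : ℝ, 0 ≤ r → r < 1 → ∀ n : ℕ, ∀ z : ℂ, |z.re| ≤ r →
      ‖F n z‖ ≤ C * (((n : ℝ) + 1) * (Real.exp ((1 - r) * Real.log q)) ^ n) := by
    intro r hr0 hr1 n z hz
    rw [hF]
    simp only
    rw [norm_smul, single_norm_one, mul_one]
    exact pfun_bound q r hq0 hq1 hr0 hr1 hc hc1 hcle n z hz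
  have hrho : ∀ r : ℝ, r < 1 → Real.exp ((1 - r) * Real.log q) < 1 := by
    intro r hr1
    apply Real.exp_lt_one_iff.mpr
    exact mul_neg_of_pos_of_neg (by linarith) hlq
  have husum : ∀ r : ℝ, r < 1 →
      Summable (fun n : ℕ => C * (((n : ℝ) + 1) * (Real.exp ((1 - r) * Real.log q)) ^ n)) := by
    intro r hr1
    exact (rho_summable (Real.exp_nonneg _) (hrho r hr1)).mul_left C
  -- summability of the series of terms for z in the strip
  have hFsum : ∀ z : ℂ, -1 < z.re → z.re < 1 → Summable (fun n => F n z) := by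
    intro z hz1 hz2
    have hzr : |z.re| < 1 := abs_lt.mpr ⟨hz1, hz2⟩
    apply Summable.of_norm
    apply Summable.of_nonneg_of_le (fun n => norm_nonneg _)
      (fun n => hbound (|z.re|) (abs_nonneg _) hzr n z le_rfl)
      (husum (|z.re|) hzr)
  set η : ℂ → lp (fun _ : ℕ => ℂ) 2 := fun z => ∑' n, F n z with hη
  -- coordinates of η
  have hcoord : ∀ z : ℂ, -1 < z.re → z.re < 1 → ∀ m : ℕ, (η z : ∀ _ : ℕ, ℂ) m = pfun q m z := by
    intro z hz1 hz2 m
    have h1 : (η z : ∀ _ : ℕ, ℂ) m = evCLM m (η z) := rfl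
    rw [h1, hη]
    rw [(evCLM m).map_tsum (hFsum z hz1 hz2)]
    have h2 : ∀ n : ℕ, evCLM m (F n z) = if m = n then pfun q n z else 0 := by
      intro n
      rw [hF]
      simp only
      rw [map_smul, evCLM_apply, smul_eq_mul]
      by_cases h : m = n
      · subst h
        rw [lp.single_apply_self, if_pos rfl, mul_one]
      · rw [lp.single_apply_ne _ _ _ h, if_neg h, mul_zero]
    rw [tsum_congr h2, tsum_eq_single m (fun n hn => by rw [if_neg (Ne.symm hn)])]
    rw [if_pos rfl]
  refine ⟨?_, η, hcoord, ?_⟩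
  · intro z hz1 hz2
    have : (fun n : ℕ => pfun q n z) = ((η z : ∀ _ : ℕ, ℂ)) :=
      funext fun n => (hcoord z hz1 hz2 n).symm
    rw [this]
    exact lp.memℓp (η z)
  · intro z hz1 hz2
    set r : ℝ := (|z.re| + 1) / 2 with hr
    have hzr : |z.re| < 1 := abs_lt.mpr ⟨hz1, hz2⟩
    have hrlt : r < 1 := by rw [hr]; linarith
    have hr0 : 0 ≤ r := by have := abs_nonneg z.re; rw [hr]; linarith
    have hzlt : |z.re| < r := by rw [hr]; linarith
    set U : Set ℂ := {w : ℂ | |w.re| < r} with hU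
    have hUopen : IsOpen U := isOpen_lt (Complex.continuous_re.abs) continuous_const
    have hdiff : DifferentiableOn ℂ (fun w => ∑' n, F n w) U := by
      apply Complex.differentiableOn_tsum_of_summable_norm (husum r hrlt)
      · intro n
        apply Differentiable.differentiableOn
        exact fun w => ((pfun_differentiable q n).differentiableAt).smul_const _
      · exact hUopen
      · intro n w hw
        exact hbound r hr0 hrlt n w (le_of_lt hw)
    have hmem : z ∈ U := hzlt
    exact (hdiff.differentiableAt (hUopen.mem_nhds hmem))
end

section
/- Let q be a real number with 0 < q < 1, let 𝒟 = {z ∈ ℂ : −1 < Re(z) < 1}, and for z ∈ 𝒟 let η_z ∈ ℓ²(ℕ; ℂ) be the vector with coordinates (p_n(z))_{n ∈ ℕ}. Then for every bounded linear operator T on ℓ²(ℕ; ℂ), the function z ↦ ⟨T η_z, η_{conj(z)}⟩ is holomorphic on 𝒟, where ⟨·,·⟩ is the inner product of ℓ²(ℕ; ℂ) and conj(z) is the complex conjugate of z. -/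
namespace Stmt12Aux

open scoped ENNReal

noncomputable def c0 (q : ℝ) : ℝ := Real.exp (-(q ^ 2 / ((1 - q ^ 2) * (1 - q ^ 2))))

lemma c0_pos (q : ℝ) : 0 < c0 q := Real.exp_pos _

variable {q : ℝ}

lemma exp_aux {a : ℝ} (h0 : 0 ≤ a) (h1 : a < 1) : Real.exp (-(a / (1 - a))) ≤ 1 - a := by
  have h1a : 0 < 1 - a := by linarith
  have h2 : 1 / (1 - a) ≤ Real.exp (a / (1 - a)) := by
    have := Real.add_one_le_exp (a / (1 - a))
    have e : a / (1 - a) + 1 = 1 / (1 - a) := by field_simp; ring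
    linarith [this, e ▸ this]
  rw [Real.exp_neg, inv_le_comm₀ (Real.exp_pos _) h1a]
  rw [one_div] at h2
  exact h2

lemma c0_le_qPoch (hq0 : 0 < q) (hq1 : q < 1) (n : ℕ) :
    c0 q ≤ qPoch (q ^ 2) (q ^ 2) n := by
  set r := q ^ 2 with hr
  have hr0 : 0 < r := by positivity
  have hr1 : r < 1 := by nlinarith
  have h1r : 0 < 1 - r := by linarith
  have key : ∀ j : ℕ, Real.exp (-(r * r ^ j / (1 - r))) ≤ 1 - r * r ^ j := by
    intro j
    have ha0 : 0 ≤ r * r ^ j := by positivity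
    have ha1 : r * r ^ j ≤ r := by
      nlinarith [pow_le_one₀ hr0.le hr1.le (n := j)]
    have := exp_aux ha0 (lt_of_le_of_lt ha1 hr1)
    refine le_trans (Real.exp_le_exp.2 ?_) this
    have : r * r ^ j / (1 - r * r ^ j) ≤ r * r ^ j / (1 - r) := by
      apply div_le_div_of_nonneg_left ha0 h1r (by linarith)
    linarith
  calc c0 q ≤ Real.exp (∑ j ∈ Finset.range n, -(r * r ^ j / (1 - r))) := by
        apply Real.exp_le_exp.2
        have hsum : ∑ j ∈ Finset.range n, r * r ^ j / (1 - r)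
            ≤ r / ((1 - r) * (1 - r)) := by
          have hg : ∑ j ∈ Finset.range n, r ^ j ≤ (1 - r)⁻¹ := by
            have := Summable.sum_le_tsum (Finset.range n) (fun i _ => by positivity)
              (summable_geometric_of_lt_one hr0.le hr1)
            rwa [tsum_geometric_of_lt_one hr0.le hr1] at this
          have : ∑ j ∈ Finset.range n, r * r ^ j / (1 - r)
              = (r / (1 - r)) * ∑ j ∈ Finset.range n, r ^ j := by
            rw [Finset.mul_sum]; congr 1; ext j; ring
          rw [this]
          calc (r / (1 - r)) * ∑ j ∈ Finset.range n, r ^ j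
              ≤ (r / (1 - r)) * (1 - r)⁻¹ := by
                apply mul_le_mul_of_nonneg_left hg (by positivity)
            _ = r / ((1 - r) * (1 - r)) := by field_simp
        have : -(r / ((1 - r) * (1 - r))) ≤ -∑ j ∈ Finset.range n, r * r ^ j / (1 - r) := by
          linarith
        simpa [c0, Finset.sum_neg_distrib] using this
    _ = ∏ j ∈ Finset.range n, Real.exp (-(r * r ^ j / (1 - r))) := by
        rw [← Real.exp_sum]
    _ ≤ ∏ j ∈ Finset.range n, (1 - r * r ^ j) := by
        apply Finset.prod_le_prod (fun j _ => (Real.exp_pos _).le) (fun j _ => key j)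
    _ = qPoch r r n := rfl

lemma qPoch_pos (hq0 : 0 < q) (hq1 : q < 1) (n : ℕ) : 0 < qPoch (q ^ 2) (q ^ 2) n :=
  lt_of_lt_of_le (c0_pos q) (c0_le_qPoch hq0 hq1 n)

lemma qPoch_le_one (hq0 : 0 < q) (hq1 : q < 1) (n : ℕ) : qPoch (q ^ 2) (q ^ 2) n ≤ 1 := by
  have hr0 : (0:ℝ) < q ^ 2 := by positivity
  have hr1 : q ^ 2 < 1 := by nlinarith
  unfold qPoch
  apply Finset.prod_le_one
  · intro j _
    have : q ^ 2 * (q ^ 2) ^ j ≤ q ^ 2 := by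
      nlinarith [pow_le_one₀ hr0.le hr1.le (n := j)]
    linarith
  · intro j _
    nlinarith [pow_nonneg hr0.le j]

lemma qbinom_nonneg (hq0 : 0 < q) (hq1 : q < 1) (n k : ℕ) : 0 ≤ qbinom (q ^ 2) n k := by
  unfold qbinom
  exact div_nonneg (qPoch_pos hq0 hq1 n).le
    (mul_nonneg (qPoch_pos hq0 hq1 k).le (qPoch_pos hq0 hq1 (n-k)).le)

lemma qbinom_le (hq0 : 0 < q) (hq1 : q < 1) (n k : ℕ) :
    qbinom (q ^ 2) n k ≤ (c0 q)⁻¹ ^ 2 := by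
  have hc := c0_pos q
  have h1 : qPoch (q ^ 2) (q ^ 2) n ≤ 1 := qPoch_le_one hq0 hq1 n
  have h2 : c0 q * c0 q ≤ qPoch (q ^ 2) (q ^ 2) k * qPoch (q ^ 2) (q ^ 2) (n - k) :=
    mul_le_mul (c0_le_qPoch hq0 hq1 k) (c0_le_qPoch hq0 hq1 (n - k)) hc.le
      (qPoch_pos hq0 hq1 k).le
  have : qbinom (q ^ 2) n k ≤ 1 / (c0 q * c0 q) :=
    div_le_div₀ (by norm_num) h1 (by positivity) h2
  calc qbinom (q ^ 2) n k ≤ 1 / (c0 q * c0 q) := this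
    _ = (c0 q)⁻¹ ^ 2 := by field_simp [pow_two]

lemma cpw_bound (hq0 : 0 < q) (hq1 : q < 1) {ρ : ℝ} (hρ0 : 0 ≤ ρ)
    {z : ℂ} (hz : |z.re| ≤ ρ) {n k : ℕ} (hk : k ≤ n) :
    ‖cpw q (z * ((n : ℂ) - 2 * (k : ℂ)))‖ ≤ (q ^ (-ρ)) ^ n := by
  have hlog : Real.log q < 0 := Real.log_neg hq0 hq1
  have habs : ‖cpw q (z * ((n : ℂ) - 2 * (k : ℂ)))‖
      = Real.exp (z.re * ((n : ℝ) - 2 * k) * Real.log q) := by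
    rw [cpw, Complex.norm_exp]
    congr 1
    have : ((n : ℂ) - 2 * (k : ℂ)) = (((n : ℝ) - 2 * k : ℝ) : ℂ) := by push_cast; ring
    rw [this]
    simp [Complex.mul_re, Complex.ofReal_re, Complex.ofReal_im]
  rw [habs]
  have hrhs : ((q : ℝ) ^ (-ρ)) ^ n = Real.exp (ρ * n * (-Real.log q)) := by
    rw [← Real.rpow_natCast (q ^ (-ρ)) n, ← Real.rpow_mul hq0.le]
    rw [Real.rpow_def_of_pos hq0]
    ring_nf
  rw [hrhs, Real.exp_le_exp]
  have hm : |(n : ℝ) - 2 * k| ≤ (n : ℝ) := by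
    rw [abs_le]
    constructor
    · have : (k : ℝ) ≤ n := by exact_mod_cast hk
      linarith
    · have : (0 : ℝ) ≤ k := Nat.cast_nonneg k
      linarith
  calc z.re * ((n : ℝ) - 2 * k) * Real.log q
      ≤ |z.re * ((n : ℝ) - 2 * k) * Real.log q| := le_abs_self _
    _ = |z.re| * |(n : ℝ) - 2 * k| * (-Real.log q) := by
        rw [abs_mul, abs_mul, abs_of_neg hlog]
    _ ≤ ρ * n * (-Real.log q) := by
        apply mul_le_mul_of_nonneg_right _ (by linarith)
        exact mul_le_mul hz hm (abs_nonneg _) hρ0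

noncomputable def Abig (q : ℝ) : ℝ := (Real.sqrt (c0 q))⁻¹ * (c0 q)⁻¹ ^ 2

lemma Abig_pos (q : ℝ) : 0 < Abig q := by
  have := c0_pos q
  unfold Abig
  positivity

lemma pfun_bound (hq0 : 0 < q) (hq1 : q < 1) {ρ : ℝ} (hρ0 : 0 ≤ ρ) (hρ1 : ρ < 1)
    {z : ℂ} (hz : |z.re| ≤ ρ) (n : ℕ) :
    ‖pfun q n z‖ ≤ Abig q * (n + 1) * (q ^ (1 - ρ)) ^ n := by
  have hc := c0_pos q
  have hP := qPoch_pos hq0 hq1 n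
  have h1 : ‖((q ^ n / Real.sqrt (qPoch (q ^ 2) (q ^ 2) n) : ℝ) : ℂ)‖
      ≤ q ^ n * (Real.sqrt (c0 q))⁻¹ := by
    rw [Complex.norm_real, Real.norm_eq_abs, abs_of_nonneg (by positivity), div_eq_mul_inv]
    apply mul_le_mul_of_nonneg_left _ (by positivity)
    apply inv_anti₀ (Real.sqrt_pos.2 hc)
    exact Real.sqrt_le_sqrt (c0_le_qPoch hq0 hq1 n)
  have h2 : ‖∑ k ∈ Finset.range (n + 1),
      (qbinom (q ^ 2) n k : ℂ) * cpw q (z * ((n : ℂ) - 2 * (k : ℂ)))‖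
      ≤ (n + 1) * ((c0 q)⁻¹ ^ 2 * (q ^ (-ρ)) ^ n) := by
    calc ‖∑ k ∈ Finset.range (n + 1),
        (qbinom (q ^ 2) n k : ℂ) * cpw q (z * ((n : ℂ) - 2 * (k : ℂ)))‖
        ≤ ∑ k ∈ Finset.range (n + 1),
          ‖(qbinom (q ^ 2) n k : ℂ) * cpw q (z * ((n : ℂ) - 2 * (k : ℂ)))‖ :=
          norm_sum_le _ _
      _ ≤ ∑ _k ∈ Finset.range (n + 1), (c0 q)⁻¹ ^ 2 * (q ^ (-ρ)) ^ n := by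
          apply Finset.sum_le_sum
          intro k hk
          rw [norm_mul]
          apply mul_le_mul _ (cpw_bound hq0 hq1 hρ0 hz (Nat.lt_succ_iff.1 (Finset.mem_range.1 hk)))
            (norm_nonneg _) (by positivity)
          rw [Complex.norm_real, Real.norm_eq_abs, abs_of_nonneg (qbinom_nonneg hq0 hq1 n k)]
          exact qbinom_le hq0 hq1 n k
      _ = (n + 1) * ((c0 q)⁻¹ ^ 2 * (q ^ (-ρ)) ^ n) := by
          rw [Finset.sum_const, Finset.card_range]
          push_cast; ring
  have hkey : (q:ℝ) ^ n * (q ^ (-ρ)) ^ n = (q ^ (1 - ρ)) ^ n := by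
    rw [← mul_pow]
    congr 1
    rw [show (1 : ℝ) - ρ = 1 + (-ρ) by ring, Real.rpow_add hq0, Real.rpow_one]
  calc ‖pfun q n z‖
      ≤ (q ^ n * (Real.sqrt (c0 q))⁻¹) * ((n + 1) * ((c0 q)⁻¹ ^ 2 * (q ^ (-ρ)) ^ n)) := by
        rw [pfun, norm_mul]
        exact mul_le_mul h1 h2 (norm_nonneg _) (by positivity)
    _ = Abig q * (n + 1) * ((q:ℝ) ^ n * (q ^ (-ρ)) ^ n) := by rw [Abig]; ring
    _ = Abig q * (n + 1) * (q ^ (1 - ρ)) ^ n := by rw [hkey]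

lemma pfun_conj (q : ℝ) (n : ℕ) (z : ℂ) :
    pfun q n (starRingEnd ℂ z) = starRingEnd ℂ (pfun q n z) := by
  unfold pfun cpw
  rw [map_mul, map_sum]
  congr 1
  · simp [Complex.conj_ofReal]
  · apply Finset.sum_congr rfl
    intro k _
    rw [map_mul, ← Complex.exp_conj]
    congr 1
    · simp [Complex.conj_ofReal]
    · congr 1
      simp [map_mul, map_sub, Complex.conj_ofReal, map_ofNat, Complex.conj_natCast]

lemma pfun_differentiable (q : ℝ) (n : ℕ) : Differentiable ℂ (pfun q n) := by
  unfold pfun cpw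
  apply Differentiable.const_mul
  apply Differentiable.fun_sum
  intro k _
  apply Differentiable.const_mul
  apply Differentiable.cexp
  exact (differentiable_id.mul_const _).mul_const _

noncomputable abbrev E2 := lp (fun _ : ℕ => ℂ) 2

noncomputable def Fpart (q : ℝ) (N : ℕ) (z : ℂ) : E2 :=
  ∑ n ∈ Finset.range N, pfun q n z • lp.single 2 n (1 : ℂ)

lemma Fpart_apply (q : ℝ) (N : ℕ) (z : ℂ) (m : ℕ) :
    (Fpart q N z : ∀ _ : ℕ, ℂ) m = if m < N then pfun q m z else 0 := by
  have h : ∀ n : ℕ, (pfun q n z • lp.single 2 n (1 : ℂ) : E2) m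
      = if m = n then pfun q m z else 0 := by
    intro n
    rw [lp.coeFn_smul, Pi.smul_apply]
    by_cases h : m = n
    · subst h; rw [lp.single_apply_self]; simp
    · rw [lp.single_apply_ne 2 n _ h]; simp [h]
  rw [Fpart, lp.coeFn_sum, Finset.sum_apply]
  simp_rw [h]
  rw [Finset.sum_ite_eq (Finset.range N) m (fun _ => pfun q m z)]
  simp [Finset.mem_range]

lemma Fpart_differentiable (q : ℝ) (N : ℕ) : Differentiable ℂ (Fpart q N) := by
  apply Differentiable.fun_sum
  intro n _
  exact (pfun_differentiable q n).smul_const _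

lemma summable_sq (hq0 : 0 < q) (hq1 : q < 1) {ρ : ℝ} (hρ0 : 0 ≤ ρ) (hρ1 : ρ < 1) :
    Summable (fun n : ℕ => (Abig q * (n + 1) * (q ^ (1 - ρ)) ^ n) ^ 2) := by
  set b := (q : ℝ) ^ (1 - ρ) with hb
  have hb0 : 0 < b := Real.rpow_pos_of_pos hq0 _
  have hb1 : b < 1 := Real.rpow_lt_one hq0.le hq1 (by linarith)
  have hr : ‖b ^ 2‖ < 1 := by
    rw [Real.norm_eq_abs, abs_of_pos (by positivity)]
    nlinarith
  have h1 := summable_pow_mul_geometric_of_norm_lt_one 2 hr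
  have h2 := summable_pow_mul_geometric_of_norm_lt_one 1 hr
  have h3 := summable_geometric_of_norm_lt_one hr
  have hsum : Summable (fun n : ℕ => ((n : ℝ) + 1) ^ 2 * (b ^ 2) ^ n) := by
    have := (h1.add (h2.mul_left 2)).add h3
    apply this.congr
    intro n
    push_cast
    ring
  apply ((hsum.mul_left ((Abig q) ^ 2)).congr)
  intro n
  have hbb : (b ^ n) ^ 2 = (b ^ 2) ^ n := by
    rw [← pow_mul, ← pow_mul, Nat.mul_comm]
  rw [mul_pow, mul_pow, hbb]
  ring

noncomputable def gfun (q ρ : ℝ) (n : ℕ) : ℝ := Abig q * (n + 1) * (q ^ (1 - ρ)) ^ n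

noncomputable def tailf (q ρ : ℝ) (N : ℕ) : ℝ := ∑' k : ℕ, (gfun q ρ (k + N)) ^ 2

lemma summable_gfun_sq (hq0 : 0 < q) (hq1 : q < 1) {ρ : ℝ} (hρ0 : 0 ≤ ρ) (hρ1 : ρ < 1) :
    Summable (fun n : ℕ => (gfun q ρ n) ^ 2) := summable_sq hq0 hq1 hρ0 hρ1

lemma tailf_nonneg (q ρ : ℝ) (N : ℕ) : 0 ≤ tailf q ρ N :=
  tsum_nonneg (fun k => sq_nonneg _)

lemma gfun_nonneg (hq0 : 0 < q) (q1 : q < 1) (ρ : ℝ) (n : ℕ) : 0 ≤ gfun q ρ n := by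
  have := Abig_pos q
  have : (0:ℝ) < q ^ (1 - ρ) := Real.rpow_pos_of_pos hq0 _
  unfold gfun
  positivity

lemma norm_sub_le_tail (hq0 : 0 < q) (hq1 : q < 1) {ρ : ℝ} (hρ0 : 0 ≤ ρ) (hρ1 : ρ < 1)
    {η : ℂ → E2}
    (hη : ∀ z : ℂ, -1 < z.re → z.re < 1 → ∀ n : ℕ, (η z : ∀ _ : ℕ, ℂ) n = pfun q n z)
    {z : ℂ} (hz1 : -1 < z.re) (hz2 : z.re < 1) (hzρ : |z.re| ≤ ρ) (N : ℕ) :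
    ‖η z - Fpart q N z‖ ≤ Real.sqrt (tailf q ρ N) := by
  have h2 : (0:ℝ) < (2 : ℝ≥0∞).toReal := by norm_num
  apply lp.norm_le_of_tsum_le h2 (Real.sqrt_nonneg _)
  have htR : ((2 : ℝ≥0∞)).toReal = ((2:ℕ):ℝ) := by norm_num
  simp_rw [htR, Real.rpow_natCast]
  rw [Real.sq_sqrt (tailf_nonneg q ρ N)]
  set v : ℕ → ℂ := fun n => (η z - Fpart q N z : E2) n with hv
  set w : ℕ → ℝ := fun n => if n < N then 0 else (gfun q ρ n) ^ 2 with hw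
  have hvw : ∀ n, ‖v n‖ ^ 2 ≤ w n := by
    intro n
    have hcoord : v n = (η z : ∀ _ : ℕ, ℂ) n - (Fpart q N z : ∀ _ : ℕ, ℂ) n := by
      rw [hv]; simp
    rw [hcoord, hη z hz1 hz2 n, Fpart_apply]
    by_cases h : n < N
    · simp [hw, h]
    · simp only [hw, if_neg h, sub_zero]
      have := pfun_bound hq0 hq1 hρ0 hρ1 hzρ n
      have hg := gfun_nonneg hq0 hq1 ρ n
      calc ‖pfun q n z‖ ^ 2 ≤ (gfun q ρ n) ^ 2 := by
            apply pow_le_pow_left₀ (norm_nonneg _) this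
        _ = _ := rfl
  have hsw : Summable w := by
    apply Summable.of_nonneg_of_le _ _ (summable_gfun_sq hq0 hq1 hρ0 hρ1)
    · intro n; by_cases h : n < N <;> simp [hw, h, sq_nonneg]
    · intro n
      by_cases h : n < N <;> simp [hw, h, sq_nonneg]
  have hsv : Summable (fun n => ‖v n‖ ^ 2) :=
    hsw.of_nonneg_of_le (fun n => sq_nonneg _) hvw
  calc ∑' n, ‖v n‖ ^ 2 ≤ ∑' n, w n := Summable.tsum_le_tsum hvw hsv hsw
    _ = tailf q ρ N := by
      have hsplit := Summable.sum_add_tsum_nat_add (f := w) N hsw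
      have h0 : ∑ i ∈ Finset.range N, w i = 0 := by
        apply Finset.sum_eq_zero
        intro i hi
        simp [hw, Finset.mem_range.1 hi]
      have h1 : ∑' i : ℕ, w (i + N) = tailf q ρ N := by
        apply tsum_congr
        intro i
        simp [hw, tailf, Nat.not_lt.2 (Nat.le_add_left N i)]
      rw [← hsplit, h0, h1, zero_add]

lemma strip_isOpen : IsOpen {z : ℂ | -1 < z.re ∧ z.re < 1} := by
  have : {z : ℂ | -1 < z.re ∧ z.re < 1} = Complex.re ⁻¹' Set.Ioo (-1) 1 := by
    ext z; simp [Set.mem_Ioo]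
  rw [this]
  exact isOpen_Ioo.preimage Complex.continuous_re

lemma eta_differentiableOn (hq0 : 0 < q) (hq1 : q < 1) {η : ℂ → E2}
    (hη : ∀ z : ℂ, -1 < z.re → z.re < 1 → ∀ n : ℕ, (η z : ∀ _ : ℕ, ℂ) n = pfun q n z) :
    DifferentiableOn ℂ η {z : ℂ | -1 < z.re ∧ z.re < 1} := by
  set s := {z : ℂ | -1 < z.re ∧ z.re < 1} with hs
  have hso : IsOpen s := strip_isOpen
  have htlu : TendstoLocallyUniformlyOn (Fpart q) η Filter.atTop s := by
    rw [tendstoLocallyUniformlyOn_iff_forall_isCompact hso]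
    intro K hKs hK
    rcases K.eq_empty_or_nonempty with rfl | hne
    · exact tendstoUniformlyOn_empty
    obtain ⟨z0, hz0K, hmax'⟩ := hK.exists_isMaxOn hne
      ((continuous_abs.comp Complex.continuous_re).continuousOn)
    have hmax : ∀ z ∈ K, |z.re| ≤ |z0.re| := fun z hz => hmax' hz
    set ρ := |z0.re| with hρ
    have hρ0 : 0 ≤ ρ := abs_nonneg _
    have hρ1 : ρ < 1 := by
      obtain ⟨h1, h2⟩ := hKs hz0K
      exact abs_lt.2 ⟨h1, h2⟩
    rw [Metric.tendstoUniformlyOn_iff]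
    intro ε hε
    have h0 : Filter.Tendsto (fun N => tailf q ρ N) Filter.atTop (nhds 0) :=
      tendsto_sum_nat_add (fun n => (gfun q ρ n) ^ 2)
    have hsq : Filter.Tendsto (fun N => Real.sqrt (tailf q ρ N)) Filter.atTop (nhds 0) := by
      have := h0.sqrt
      simpa using this
    filter_upwards [hsq.eventually (gt_mem_nhds hε)] with N hN z hzK
    rw [dist_eq_norm]
    obtain ⟨hz1, hz2⟩ := hKs hzK
    exact lt_of_le_of_lt
      (norm_sub_le_tail hq0 hq1 hρ0 hρ1 hη hz1 hz2 (hmax z hzK) N) hN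
  exact htlu.differentiableOn
    (Filter.Eventually.of_forall fun N => (Fpart_differentiable q N).differentiableOn) hso

noncomputable def Bform : E2 →L[ℂ] E2 →L[ℂ] ℂ :=
  LinearMap.mkContinuous
    { toFun := fun x => innerSL ℂ (star x)
      map_add' := fun x y => by
        ext w
        simp [star_add, inner_add_left]
      map_smul' := fun c x => by
        ext w
        simp [star_smul, inner_smul_left] }
    1 (fun x => by
      rw [one_mul]
      exact le_of_eq (by
        show ‖innerSL ℂ (star x)‖ = ‖x‖
        rw [innerSL_apply_norm ℂ (star x), norm_star]))

lemma Bform_apply (x y : E2) : Bform x y = (inner ℂ (star x) y : ℂ) := rfl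

end Stmt12Aux

open Stmt12Aux in
theorem stmt12 (q : ℝ) (hq0 : 0 < q) (hq1 : q < 1) :
    ∀ η : ℂ → lp (fun _ : ℕ => ℂ) 2,
      (∀ z : ℂ, -1 < z.re → z.re < 1 → ∀ n : ℕ, (η z : ∀ _ : ℕ, ℂ) n = pfun q n z) →
      ∀ T : lp (fun _ : ℕ => ℂ) 2 →L[ℂ] lp (fun _ : ℕ => ℂ) 2,
        DifferentiableOn ℂ
          (fun z : ℂ => (inner ℂ (η (starRingEnd ℂ z)) (T (η z)) : ℂ))
          {z : ℂ | -1 < z.re ∧ z.re < 1} := by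
  intro η hη T
  set s := {z : ℂ | -1 < z.re ∧ z.re < 1} with hs
  have hηd : DifferentiableOn ℂ η s := eta_differentiableOn hq0 hq1 hη
  have hTd : DifferentiableOn ℂ (fun z => T (η z)) s :=
    T.differentiable.comp_differentiableOn hηd
  have hBd : DifferentiableOn ℂ (fun z => Bform (η z)) s :=
    Bform.differentiable.comp_differentiableOn hηd
  have hdiff : DifferentiableOn ℂ (fun z => Bform (η z) (T (η z))) s := hBd.clm_apply hTd
  apply hdiff.congr
  intro z hz
  obtain ⟨hz1, hz2⟩ := hz
  have hstar : η (starRingEnd ℂ z) = star (η z) := by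
    apply lp.ext
    funext n
    show (η (starRingEnd ℂ z) : ∀ _ : ℕ, ℂ) n = star ((η z : ∀ _ : ℕ, ℂ) n)
    have hr1 : -1 < (starRingEnd ℂ z).re := by simpa using hz1
    have hr2 : (starRingEnd ℂ z).re < 1 := by simpa using hz2
    rw [hη _ hr1 hr2 n, hη z hz1 hz2 n, pfun_conj]
    rfl
  show (inner ℂ (η (starRingEnd ℂ z)) (T (η z)) : ℂ) = Bform (η z) (T (η z))
  rw [hstar, Bform_apply]
end

section
/- Let q be a real number with 0 < q < 1 and let t ∈ ℝ with 0 < t < 0.3. With b_d(t) = μ_d(q^t + q^{−t}) / μ_d(q + q^{−1}), the series Σ_{d=0}^{∞} b_d(t)³ · μ_d(q + q^{−1})² converges. -/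
lemma mu_closed (y : ℝ) (hy : y ≠ 0) : ∀ d : ℕ,
    mu d (y + y⁻¹) * (y⁻¹ - y) = y⁻¹ ^ (d + 1) - y ^ (d + 1) := by
  intro d
  induction d using Nat.twoStepInduction with
  | zero => simp [mu]
  | one => simp only [mu]; ring
  | more n ih1 ih2 =>
    show ((y + y⁻¹) * mu (n+1) (y + y⁻¹) - mu n (y + y⁻¹)) * (y⁻¹ - y) = _
    have h1 := ih1
    have h2 := ih2
    have : (y + y⁻¹) * (mu (n+1) (y + y⁻¹) * (y⁻¹ - y)) - mu n (y + y⁻¹) * (y⁻¹ - y)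
        = (y + y⁻¹) * (y⁻¹^(n+2) - y^(n+2)) - (y⁻¹^(n+1) - y^(n+1)) := by rw [h1, h2]
    calc ((y + y⁻¹) * mu (n+1) (y + y⁻¹) - mu n (y + y⁻¹)) * (y⁻¹ - y)
        = (y + y⁻¹) * (mu (n+1) (y + y⁻¹) * (y⁻¹ - y)) - mu n (y + y⁻¹) * (y⁻¹ - y) := by ring
      _ = (y + y⁻¹) * (y⁻¹^(n+2) - y^(n+2)) - (y⁻¹^(n+1) - y^(n+1)) := this
      _ = y⁻¹ ^ (n + 2 + 1) - y ^ (n + 2 + 1) := by linear_combination (y⁻¹^(n+1) - y^(n+1)) * mul_inv_cancel₀ hy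


lemma inv_sub_pos (y : ℝ) (hy0 : 0 < y) (hy1 : y < 1) : 0 < y⁻¹ - y := by
  have h1 : 1 < y⁻¹ := by
    rw [lt_inv_comm₀ (by norm_num) hy0]; simpa using hy1
  linarith

lemma mu_div (y : ℝ) (hy0 : 0 < y) (hy1 : y < 1) (d : ℕ) :
    mu d (y + y⁻¹) = (y⁻¹ ^ (d + 1) - y ^ (d + 1)) / (y⁻¹ - y) := by
  rw [eq_div_iff (ne_of_gt (inv_sub_pos y hy0 hy1))]
  exact mu_closed y (ne_of_gt hy0) d

lemma mu_pos (y : ℝ) (hy0 : 0 < y) (hy1 : y < 1) (d : ℕ) :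
    0 < mu d (y + y⁻¹) := by
  rw [mu_div y hy0 hy1]
  apply div_pos _ (inv_sub_pos y hy0 hy1)
  have h1 : 1 < y⁻¹ := by rw [lt_inv_comm₀ (by norm_num) hy0]; simpa using hy1
  have : y ^ (d+1) < y⁻¹ ^ (d+1) := pow_lt_pow_left₀ (hy1.trans h1) hy0.le (by omega)
  linarith

theorem stmt13 (q t : ℝ) (hq0 : 0 < q) (hq1 : q < 1) (ht0 : 0 < t) (ht1 : t < 0.3) :
    Summable (fun d : ℕ =>
      (mu d (q ^ t + q ^ (-t)) / mu d (q + q⁻¹)) ^ 3 * (mu d (q + q⁻¹)) ^ 2) := by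
  set s := q ^ t with hs
  have hs0 : 0 < s := Real.rpow_pos_of_pos hq0 t
  have hs1 : s < 1 := Real.rpow_lt_one hq0.le hq1 ht0
  have hneg : q ^ (-t) = s⁻¹ := by rw [hs, Real.rpow_neg hq0.le]
  have hss := inv_sub_pos s hs0 hs1
  have hqq := inv_sub_pos q hq0 hq1
  set r := q ^ (1 - 3 * t) with hr
  have hr0 : 0 ≤ r := (Real.rpow_pos_of_pos hq0 _).le
  have hr1 : r < 1 := Real.rpow_lt_one hq0.le hq1 (by norm_num at ht1 ⊢; linarith)
  set C := q ^ (-(3 * t)) / (s⁻¹ - s) ^ 3 with hC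
  refine Summable.of_nonneg_of_le ?_ ?_
    ((summable_geometric_of_lt_one hr0 hr1).mul_left C)
  · intro d
    rw [hneg]
    have ha := mu_pos s hs0 hs1 d
    have hc := mu_pos q hq0 hq1 d
    positivity
  · intro d
    rw [hneg]
    have ha := mu_pos s hs0 hs1 d
    have hc := mu_pos q hq0 hq1 d
    have heq : (mu d (s + s⁻¹) / mu d (q + q⁻¹)) ^ 3 * (mu d (q + q⁻¹)) ^ 2
        = (mu d (s + s⁻¹)) ^ 3 / mu d (q + q⁻¹) := by
      rw [eq_div_iff (ne_of_gt hc), div_pow, div_mul_eq_mul_div, div_mul_eq_mul_div,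
        div_eq_iff (by positivity : (mu d (q + q⁻¹)) ^ 3 ≠ 0)]
      ring
    rw [heq]
    have hcge : (q : ℝ)⁻¹ ^ d ≤ mu d (q + q⁻¹) := by
      rw [mu_div q hq0 hq1, le_div_iff₀ hqq]
      have h3 : q ^ (d + 1) ≤ q⁻¹ ^ d * q := by
        rw [inv_pow, ← div_eq_inv_mul, le_div_iff₀ (pow_pos hq0 d), ← pow_add]
        calc q ^ (d + 1 + d) ≤ q ^ 1 := pow_le_pow_of_le_one hq0.le hq1.le (by omega)
          _ = q := pow_one q
      have expand : q⁻¹ ^ d * (q⁻¹ - q) = q⁻¹ ^ (d + 1) - q⁻¹ ^ d * q := by ring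
      linarith
    have hale : mu d (s + s⁻¹) ≤ s⁻¹ ^ (d + 1) / (s⁻¹ - s) := by
      rw [mu_div s hs0 hs1]
      gcongr
      nlinarith [pow_pos hs0 (d + 1)]
    have key : (s⁻¹ ^ (d + 1) / (s⁻¹ - s)) ^ 3 / (q⁻¹ ^ d) = C * r ^ d := by
      have e2 : (q : ℝ)⁻¹ ^ d = (q ^ ((d : ℕ) : ℝ))⁻¹ := by
        rw [Real.rpow_natCast, inv_pow]
      have e3 : s⁻¹ ^ (d + 1) = q ^ (-t * (((d + 1 : ℕ)) : ℝ)) := by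
        rw [← hneg, ← Real.rpow_natCast (q ^ (-t)) (d + 1), ← Real.rpow_mul hq0.le]
      have e4 : r ^ d = q ^ ((1 - 3 * t) * ((d : ℕ) : ℝ)) := by
        rw [hr, ← Real.rpow_natCast (q ^ (1 - 3 * t)) d, ← Real.rpow_mul hq0.le]
      rw [div_pow, e3, e2, div_inv_eq_mul,
        ← Real.rpow_natCast (q ^ (-t * (((d + 1 : ℕ)) : ℝ))) 3, ← Real.rpow_mul hq0.le,
        e4, hC, div_mul_eq_mul_div, div_mul_eq_mul_div,
        ← Real.rpow_add hq0, ← Real.rpow_add hq0]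
      congr 2
      push_cast
      ring
    calc (mu d (s + s⁻¹)) ^ 3 / mu d (q + q⁻¹)
        ≤ (s⁻¹ ^ (d + 1) / (s⁻¹ - s)) ^ 3 / (q⁻¹ ^ d) := by
          apply div_le_div₀ (by positivity) (pow_le_pow_left₀ ha.le hale 3)
            (pow_pos (inv_pos.mpr hq0) d) hcge
      _ = C * r ^ d := key
end

section
/- Let c and N be real numbers with c ≥ 2 and N² > c + 2. Then the sequence d ↦ μ_d(N)² / μ_d(c) tends to infinity as d → ∞. -/
lemma mu_neg {R : Type*} [CommRing R] : ∀ (n : ℕ) (x : R), mu n (-x) = (-1) ^ n * mu n x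
  | 0, x => by simp [mu]
  | 1, x => by simp [mu]
  | (n + 2), x => by
    rw [mu, mu, mu_neg (n + 1), mu_neg n]; ring

section bounds

variable {u : ℝ}

/-- Step lower bound: if `x = u + u⁻¹` with `u ≥ 1` then `u * μ_n(x) ≤ μ_{n+1}(x)`. -/
lemma mu_step_lower (hu : 1 ≤ u) : ∀ n : ℕ, u * mu n (u + u⁻¹) ≤ mu (n + 1) (u + u⁻¹)
  | 0 => by
    have : (0:ℝ) < u⁻¹ := inv_pos.2 (lt_of_lt_of_le one_pos hu)
    simp only [mu]; nlinarith
  | (n + 1) => by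
    have hu0 : (0:ℝ) < u := lt_of_lt_of_le one_pos hu
    have ih := mu_step_lower hu n
    have h1 : mu n (u + u⁻¹) ≤ u⁻¹ * mu (n + 1) (u + u⁻¹) := by
      rw [le_inv_mul_iff₀ hu0]
      exact ih
    show u * mu (n + 1) (u + u⁻¹) ≤ (u + u⁻¹) * mu (n + 1) (u + u⁻¹) - mu n (u + u⁻¹)
    nlinarith

lemma mu_pow_le (hu : 1 ≤ u) (n : ℕ) : u ^ n ≤ mu n (u + u⁻¹) := by
  induction n with
  | zero => simp [mu]
  | succ k ih =>
    calc u ^ (k + 1) = u * u ^ k := by ring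
    _ ≤ u * mu k (u + u⁻¹) :=
        mul_le_mul_of_nonneg_left ih (le_trans zero_le_one hu)
    _ ≤ mu (k + 1) (u + u⁻¹) := mu_step_lower hu k

lemma mu_pos_s15 (hu : 1 ≤ u) (n : ℕ) : 0 < mu n (u + u⁻¹) :=
  lt_of_lt_of_le (pow_pos (lt_of_lt_of_le one_pos hu) n) (mu_pow_le hu n)

/-- Step upper bound: `μ_{n+1}(x) ≤ u * μ_n(x) + u^{n+1}`. -/
lemma mu_step_upper (hu : 1 ≤ u) : ∀ n : ℕ, mu (n + 1) (u + u⁻¹) ≤ u * mu n (u + u⁻¹) + u ^ (n + 1)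
  | 0 => by
    have hu0 : (0:ℝ) < u := lt_of_lt_of_le one_pos hu
    have h1 : u⁻¹ ≤ u := by
      rw [inv_le_comm₀ hu0 hu0]
      calc u⁻¹ ≤ 1 := inv_le_one_of_one_le₀ hu
      _ ≤ u := hu
    simp only [mu]; nlinarith
  | (n + 1) => by
    have hu0 : (0:ℝ) < u := lt_of_lt_of_le one_pos hu
    have ih := mu_step_upper hu n
    have hlow := mu_pow_le hu n
    have hun : (1:ℝ) ≤ u ^ 2 := by nlinarith
    show (u + u⁻¹) * mu (n + 1) (u + u⁻¹) - mu n (u + u⁻¹)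
        ≤ u * mu (n + 1) (u + u⁻¹) + u ^ (n + 1 + 1)
    have h2 : u⁻¹ * mu (n + 1) (u + u⁻¹) ≤ mu n (u + u⁻¹) + u ^ n := by
      rw [inv_mul_le_iff₀ hu0]
      calc mu (n + 1) (u + u⁻¹) ≤ u * mu n (u + u⁻¹) + u ^ (n + 1) := ih
      _ = u * (mu n (u + u⁻¹) + u ^ n) := by ring
    have h3 : u ^ n ≤ u ^ (n + 2) := by
      calc u ^ n = 1 * u ^ n := (one_mul _).symm
      _ ≤ u ^ 2 * u ^ n := mul_le_mul_of_nonneg_right hun (pow_nonneg hu0.le n)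
      _ = u ^ (n + 2) := by ring
    have : u ^ (n + 1 + 1) = u ^ (n + 2) := rfl
    nlinarith

lemma mu_le_pow (hu : 1 ≤ u) (n : ℕ) : mu n (u + u⁻¹) ≤ (n + 1) * u ^ n := by
  induction n with
  | zero => simp [mu]
  | succ k ih =>
    have hu0 : (0:ℝ) < u := lt_of_lt_of_le one_pos hu
    calc mu (k + 1) (u + u⁻¹) ≤ u * mu k (u + u⁻¹) + u ^ (k + 1) := mu_step_upper hu k
    _ ≤ u * ((k + 1) * u ^ k) + u ^ (k + 1) :=
        add_le_add_left (mul_le_mul_of_nonneg_left ih hu0.le) _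
    _ = (↑(k + 1) + 1) * u ^ (k + 1) := by push_cast; ring

end bounds

/-- For `x ≥ 2`, there is `u ≥ 1` with `x = u + u⁻¹`. -/
lemma exists_u (x : ℝ) (hx : 2 ≤ x) : ∃ u : ℝ, 1 ≤ u ∧ u + u⁻¹ = x ∧ u ≤ x := by
  set D := Real.sqrt (x ^ 2 - 4) with hD
  have hD0 : 0 ≤ D := Real.sqrt_nonneg _
  have hDsq : D ^ 2 = x ^ 2 - 4 := Real.sq_sqrt (by nlinarith)
  have hDx : D ≤ x := by nlinarith
  refine ⟨(x + D) / 2, by nlinarith, ?_, by nlinarith⟩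
  have hpos : (0:ℝ) < (x + D) / 2 := by nlinarith
  field_simp
  nlinarith

theorem stmt15 (c N : ℝ) (hc : 2 ≤ c) (hN : c + 2 < N ^ 2) :
    Filter.Tendsto (fun d : ℕ => (mu d N) ^ 2 / mu d c) Filter.atTop Filter.atTop := by
  have ha2 : 2 < |N| := by nlinarith [sq_abs N, abs_nonneg N]
  obtain ⟨t, ht1, htx, htle⟩ := exists_u |N| ha2.le
  obtain ⟨s, hs1, hsx, hsle⟩ := exists_u c hc
  have ht0 : (0:ℝ) < t := lt_of_lt_of_le one_pos ht1
  have hs0 : (0:ℝ) < s := lt_of_lt_of_le one_pos hs1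
  -- T = t² satisfies T + T⁻¹ = N² - 2 > c = s + s⁻¹, hence T > s
  set T := t ^ 2 with hT
  have hT1 : 1 ≤ T := by nlinarith
  have hT0 : (0:ℝ) < T := by positivity
  have hTs : s < T := by
    by_contra h
    push_neg at h
    have hTi : T * T⁻¹ = 1 := mul_inv_cancel₀ hT0.ne'
    have hsi : s * s⁻¹ = 1 := mul_inv_cancel₀ hs0.ne'
    have hti : t * t⁻¹ = 1 := mul_inv_cancel₀ ht0.ne'
    have habs : |N| ^ 2 = N ^ 2 := sq_abs N
    -- T + T⁻¹ = |N|² - 2 = N² - 2 > c = s + s⁻¹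
    have hkey : s + s⁻¹ < T + T⁻¹ := by
      have h1 : T + T⁻¹ = N ^ 2 - 2 := by
        have : (t + t⁻¹) ^ 2 = N ^ 2 := by rw [htx, habs]
        have hTinv : T⁻¹ = t⁻¹ ^ 2 := by
          rw [hT]; field_simp
        nlinarith
      rw [h1, hsx]
      linarith
    -- but T ≤ s, 1 ≤ T, 1 ≤ s forces T + T⁻¹ ≤ s + s⁻¹
    nlinarith [mul_pos hT0 hs0, mul_le_mul_of_nonneg_left h hT0.le]
  set r := T / s with hr
  have hr1 : 1 < r := (one_lt_div hs0).2 hTs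
  -- the comparison sequence r^d / (d+1) tends to infinity
  have haux : Filter.Tendsto (fun d : ℕ => r ^ d / (d + 1)) Filter.atTop Filter.atTop := by
    have h1 : Filter.Tendsto (fun d : ℕ => ((d : ℝ) + 1) / r ^ d) Filter.atTop (nhds 0) := by
      have hA := tendsto_pow_const_div_const_pow_of_one_lt 1 hr1
      have hB : Filter.Tendsto (fun d : ℕ => (1 : ℝ) / r ^ d) Filter.atTop (nhds 0) := by
        simpa [one_div] using
          (tendsto_pow_atTop_nhds_zero_of_lt_one (by positivity)
            ((inv_lt_one₀ (by linarith)).2 hr1)).congr (fun d => by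
              rw [inv_pow])
      have := hA.add hB
      simpa [pow_one, add_div] using this
    have h2 : Filter.Tendsto (fun d : ℕ => ((d : ℝ) + 1) / r ^ d) Filter.atTop
        (nhdsWithin 0 (Set.Ioi 0)) := by
      apply tendsto_nhdsWithin_of_tendsto_nhds_of_eventually_within _ h1
      filter_upwards with d
      have : (0:ℝ) < r ^ d := pow_pos (by linarith) d
      exact Set.mem_Ioi.mpr (by positivity)
    have := h2.inv_tendsto_nhdsGT_zero
    refine this.congr fun d => ?_
    simp [Pi.inv_apply, one_div]
  refine Filter.tendsto_atTop_mono ?_ haux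
  intro d
  have hmupos : 0 < mu d c := by rw [← hsx]; exact mu_pos_s15 hs1 d
  have hnum : T ^ d ≤ (mu d N) ^ 2 := by
    have h1 : (mu d N) ^ 2 = (mu d |N|) ^ 2 := by
      rcases le_or_gt 0 N with h | h
      · rw [abs_of_nonneg h]
      · rw [abs_of_neg h, show -N = -(N : ℝ) from rfl, mu_neg, mul_pow, ← pow_mul,
          mul_comm d 2, pow_mul]
        norm_num
    rw [h1, hT, ← pow_mul, mul_comm 2 d, pow_mul]
    have := mu_pow_le ht1 d
    rw [htx] at this
    exact pow_le_pow_left₀ (pow_nonneg ht0.le d) this 2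
  have hden : mu d c ≤ (d + 1) * s ^ d := by
    rw [← hsx]; exact mu_le_pow hs1 d
  calc r ^ d / (d + 1) = T ^ d / ((d + 1) * s ^ d) := by
        rw [hr, div_pow, div_div, mul_comm]
  _ ≤ (mu d N) ^ 2 / mu d c :=
      div_le_div₀ (sq_nonneg _) hnum hmupos hden
end
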